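/- arXiv:2312.07373 — 5 statements merged into one kernel-verified Lean document; each statement's English description precedes it below -/
import Mathlib

section
/- Let (Z_j)_{j≥1} be a sequence of independent, identically distributed real-valued random variables such that E[|Z_1|^r] < ∞ for some real r ≥ 2. Then for every R > E[|Z_1|] there exists a constant C > 0 such that for all positive integers J, P[(1/J) ∑_{j=1}^J Z_j ≥ R] ≤ C · J^{−r/2}. -/
open MeasureTheory ProbabilityTheory
open scoped ENNReal NNReal


section AuxForProbLargeExcursions
open Real

lemma exp_le_one_add_add_sq_half {x : ℝ} (hx : x ≤ 0) :
    Real.exp x ≤ 1 + x + x ^ 2 / 2 := by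
  have hanti : AntitoneOn (fun y : ℝ => 1 + y + y ^ 2 / 2 - Real.exp y) (Set.Iic 0) := by
    apply antitoneOn_of_deriv_nonpos (convex_Iic 0)
    · fun_prop
    · fun_prop
    · intro y hy
      rw [interior_Iic] at hy
      have hd : HasDerivAt (fun y : ℝ => 1 + y + y ^ 2 / 2 - Real.exp y)
          (1 + y - Real.exp y) y := by
        have h1 : HasDerivAt (fun y : ℝ => 1 + y + y ^ 2 / 2 - Real.exp y)
            ((0 + 1 + (2 : ℕ) * y ^ 1 / 2) - Real.exp y) y := by
          exact (((hasDerivAt_const y (1:ℝ)).add (hasDerivAt_id y)).add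
            ((hasDerivAt_pow 2 y).div_const 2)).sub (Real.hasDerivAt_exp y)
        convert h1 using 1; ring
      rw [hd.deriv]
      have := Real.add_one_le_exp y
      linarith
  have h0 : (0:ℝ) ∈ Set.Iic (0:ℝ) := by simp
  have hx' : x ∈ Set.Iic (0:ℝ) := hx
  have := hanti hx' h0 hx
  simp only [Real.exp_zero] at this
  linarith

lemma exp_le_quadratic {x c : ℝ} (hc : 0 ≤ c) (hx : x ≤ c) :
    Real.exp x ≤ 1 + x + x ^ 2 / 2 * Real.exp c := by
  rcases le_or_gt x 0 with h0 | h0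
  · have h1 := exp_le_one_add_add_sq_half h0
    have h2 : (1:ℝ) ≤ Real.exp c := Real.one_le_exp hc
    nlinarith [sq_nonneg x]
  · have hmono : MonotoneOn (fun y : ℝ => 1 + y + y ^ 2 / 2 * Real.exp c - Real.exp y)
        (Set.Icc 0 c) := by
      apply monotoneOn_of_deriv_nonneg (convex_Icc 0 c)
      · fun_prop
      · fun_prop
      · intro y hy
        rw [interior_Icc] at hy
        have hd : HasDerivAt (fun y : ℝ => 1 + y + y ^ 2 / 2 * Real.exp c - Real.exp y)
            (1 + y * Real.exp c - Real.exp y) y := by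
        
          have h1 : HasDerivAt (fun y : ℝ => 1 + y + y ^ 2 / 2 * Real.exp c - Real.exp y)
              ((0 + 1 + ((2 : ℕ) * y ^ 1 / 2) * Real.exp c) - Real.exp y) y := by
            exact (((hasDerivAt_const y (1:ℝ)).add (hasDerivAt_id y)).add
              (((hasDerivAt_pow 2 y).div_const 2).mul_const _)).sub (Real.hasDerivAt_exp y)
          convert h1 using 1; ring
        rw [hd.deriv]
        -- exp y - 1 ≤ y * exp y ≤ y * exp c
        have hy0 : 0 < y := hy.1
        have h1 : 1 - y ≤ Real.exp (-y) := by linarith [Real.add_one_le_exp (-y)]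
        have h2 : (1 - y) * Real.exp y ≤ 1 := by
          calc (1 - y) * Real.exp y ≤ Real.exp (-y) * Real.exp y := by
                apply mul_le_mul_of_nonneg_right h1 (Real.exp_nonneg y)
            _ = 1 := by rw [← Real.exp_add]; simp
        have h3 : y * Real.exp y ≤ y * Real.exp c :=
          mul_le_mul_of_nonneg_left (Real.exp_le_exp.2 hy.2.le) hy0.le
        nlinarith
    have h0' : (0:ℝ) ∈ Set.Icc 0 c := by constructor <;> simp [hc]
    have hx' : x ∈ Set.Icc 0 c := ⟨h0.le, hx⟩
    have := hmono h0' hx' h0.le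
    simp only [Real.exp_zero] at this
    linarith
lemma lintegral_rpow_lt_top_of_le {Ω : Type*} [MeasurableSpace Ω] (P : Measure Ω)
    [IsProbabilityMeasure P] {f : Ω → ℝ} (hf : Measurable f) {r s : ℝ}
    (hs0 : 0 ≤ s) (hsr : s ≤ r)
    (hmom : ∫⁻ ω, (‖f ω‖₊ : ℝ≥0∞) ^ r ∂P < ⊤) :
    ∫⁻ ω, (‖f ω‖₊ : ℝ≥0∞) ^ s ∂P < ⊤ := by
  calc ∫⁻ ω, (‖f ω‖₊ : ℝ≥0∞) ^ s ∂P
      ≤ ∫⁻ ω, (1 + (‖f ω‖₊ : ℝ≥0∞) ^ r) ∂P := by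
        apply lintegral_mono
        intro ω
        rcases le_or_gt ((‖f ω‖₊ : ℝ≥0∞)) 1 with h | h
        · calc (‖f ω‖₊ : ℝ≥0∞) ^ s ≤ 1 ^ s := ENNReal.rpow_le_rpow h hs0
            _ = 1 := ENNReal.one_rpow s
            _ ≤ _ := le_self_add
        · calc (‖f ω‖₊ : ℝ≥0∞) ^ s ≤ (‖f ω‖₊ : ℝ≥0∞) ^ r :=
              ENNReal.rpow_le_rpow_of_exponent_le h.le hsr
            _ ≤ _ := le_add_self
    _ = 1 + ∫⁻ ω, (‖f ω‖₊ : ℝ≥0∞) ^ r ∂P := by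
        rw [lintegral_add_left measurable_const]; simp
    _ < ⊤ := by
        rw [ENNReal.add_lt_top]; exact ⟨ENNReal.one_lt_top, hmom⟩

lemma integrable_of_rpow_mom {Ω : Type*} [MeasurableSpace Ω] (P : Measure Ω)
    [IsProbabilityMeasure P] {f : Ω → ℝ} (hf : Measurable f) {r : ℝ} (hr : 2 ≤ r)
    (hmom : ∫⁻ ω, (‖f ω‖₊ : ℝ≥0∞) ^ r ∂P < ⊤) :
    Integrable f P ∧ Integrable (fun ω => f ω ^ 2) P := by
  constructor
  · refine ⟨hf.aestronglyMeasurable, ?_⟩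
    rw [hasFiniteIntegral_def]
    have := lintegral_rpow_lt_top_of_le P hf (zero_le_one) (by linarith) hmom
    simpa [ENNReal.rpow_one, enorm_eq_nnnorm] using this
  · refine ⟨(hf.pow_const 2).aestronglyMeasurable, ?_⟩
    rw [hasFiniteIntegral_def]
    have := lintegral_rpow_lt_top_of_le P hf (by norm_num : (0:ℝ) ≤ 2) hr hmom
    have heq : ∀ ω, ((‖f ω ^ 2‖₊ : ℝ≥0∞)) = (‖f ω‖₊ : ℝ≥0∞) ^ (2:ℝ) := by
      intro ω
      rw [show ((2:ℝ)) = ((2:ℕ):ℝ) by norm_num, ENNReal.rpow_natCast, nnnorm_pow]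
      push_cast
      ring
    simpa [enorm_eq_nnnorm, heq] using this
lemma tail_prob_le {Ω : Type*} [MeasurableSpace Ω] (P : Measure Ω) [IsProbabilityMeasure P]
    {f : Ω → ℝ} (hf : Measurable f) {r M : ℝ} (hr : 0 < r) (hM : 0 < M)
    (hmom : ∫⁻ ω, (‖f ω‖₊ : ℝ≥0∞) ^ r ∂P < ⊤) :
    P {ω | M < f ω} ≤
      ENNReal.ofReal ((∫⁻ ω, (‖f ω‖₊ : ℝ≥0∞) ^ r ∂P).toReal / M ^ r) := by
  set m := (∫⁻ ω, (‖f ω‖₊ : ℝ≥0∞) ^ r ∂P).toReal with hm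
  have hMr : 0 < M ^ r := Real.rpow_pos_of_pos hM r
  have hsub : {ω | M < f ω} ⊆ {ω | ENNReal.ofReal (M ^ r) ≤ (‖f ω‖₊ : ℝ≥0∞) ^ r} := by
    intro ω h
    simp only [Set.mem_setOf_eq] at h ⊢
    have h1 : M ^ r ≤ |f ω| ^ r :=
      Real.rpow_le_rpow hM.le (le_trans h.le (le_abs_self _)) hr.le
    calc ENNReal.ofReal (M ^ r) ≤ ENNReal.ofReal (|f ω| ^ r) := ENNReal.ofReal_le_ofReal h1
      _ = (‖f ω‖₊ : ℝ≥0∞) ^ r := by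
          rw [← enorm_eq_nnnorm, Real.enorm_eq_ofReal_abs, ← ENNReal.ofReal_rpow_of_nonneg (abs_nonneg _) hr.le]
  have hmark := mul_meas_ge_le_lintegral₀
    (μ := P) (by fun_prop : AEMeasurable (fun ω => (‖f ω‖₊ : ℝ≥0∞) ^ r) P)
    (ENNReal.ofReal (M ^ r))
  have h2 : P {ω | M < f ω} ≤ (∫⁻ ω, (‖f ω‖₊ : ℝ≥0∞) ^ r ∂P) / ENNReal.ofReal (M ^ r) := by
    rw [ENNReal.le_div_iff_mul_le (Or.inl (by simp [hMr])) (Or.inl ENNReal.ofReal_ne_top)]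
    calc P {ω | M < f ω} * ENNReal.ofReal (M ^ r)
        ≤ P {ω | ENNReal.ofReal (M ^ r) ≤ (‖f ω‖₊ : ℝ≥0∞) ^ r} * ENNReal.ofReal (M ^ r) := by
          exact mul_le_mul_left (measure_mono hsub) _
      _ = ENNReal.ofReal (M ^ r) * P {ω | ENNReal.ofReal (M ^ r) ≤ (‖f ω‖₊ : ℝ≥0∞) ^ r} :=
          mul_comm _ _
      _ ≤ _ := hmark
  calc P {ω | M < f ω} ≤ (∫⁻ ω, (‖f ω‖₊ : ℝ≥0∞) ^ r ∂P) / ENNReal.ofReal (M ^ r) := h2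
    _ = ENNReal.ofReal m / ENNReal.ofReal (M ^ r) := by rw [hm, ENNReal.ofReal_toReal hmom.ne]
    _ = ENNReal.ofReal (m / M ^ r) := (ENNReal.ofReal_div_of_pos hMr).symm



end AuxForProbLargeExcursions

set_option maxHeartbeats 2000000 in
/-- **Bound on the probability of large excursions.**
If `(Z j)` are i.i.d. real random variables with `E[|Z 0|^r] < ∞` for some `r ≥ 2`,
then for every `R > E[|Z 0|]` there is `C > 0` such that for all `J ≥ 1`,
`P[(1/J) ∑_{j<J} Z j ≥ R] ≤ C J^{-r/2}`. -/
theorem prob_large_excursions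
    {Ω : Type*} [MeasurableSpace Ω] (P : Measure Ω) [IsProbabilityMeasure P]
    (Z : ℕ → Ω → ℝ) (hmeas : ∀ j, Measurable (Z j))
    (hindep : iIndepFun Z P)
    (hident : ∀ j, IdentDistrib (Z j) (Z 0) P P)
    (r : ℝ) (hr : 2 ≤ r)
    (hmom : ∫⁻ ω, (‖Z 0 ω‖₊ : ℝ≥0∞) ^ r ∂P < ⊤)
    (R : ℝ) (hR : ∫ ω, |Z 0 ω| ∂P < R) :
    ∃ C > 0, ∀ J : ℕ, 0 < J →
      P {ω | R ≤ (J : ℝ)⁻¹ * ∑ j ∈ Finset.range J, Z j ω}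
        ≤ ENNReal.ofReal (C * (J : ℝ) ^ (-(r / 2))) := by
  obtain ⟨hZ0, hZ0sq⟩ := integrable_of_rpow_mom P (hmeas 0) hr hmom
  obtain ⟨μ₁, hμ₁⟩ : ∃ x, x = ∫ ω, |Z 0 ω| ∂P := ⟨_, rfl⟩
  rw [← hμ₁] at hR
  obtain ⟨δ, hδdef⟩ : ∃ x, x = R - μ₁ := ⟨_, rfl⟩
  have hδ : 0 < δ := by rw [hδdef]; linarith
  obtain ⟨σ₂, hσ₂def⟩ : ∃ x, x = ∫ ω, (Z 0 ω) ^ 2 ∂P := ⟨_, rfl⟩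
  have hσ₂0 : 0 ≤ σ₂ := by rw [hσ₂def]; exact integral_nonneg fun ω => sq_nonneg _
  obtain ⟨m, hmdef⟩ : ∃ x, x = (∫⁻ ω, (‖Z 0 ω‖₊ : ℝ≥0∞) ^ r ∂P).toReal := ⟨_, rfl⟩
  have hm0 : 0 ≤ m := hmdef ▸ ENNReal.toReal_nonneg
  obtain ⟨A, hAdef⟩ : ∃ x, x = r / 2 := ⟨_, rfl⟩
  have hA1 : 1 ≤ A := by rw [hAdef]; linarith
  have hA0 : 0 < A := lt_of_lt_of_le one_pos hA1
  obtain ⟨B, hBdef⟩ : ∃ x, x = 8 * A ^ 2 * σ₂ / δ ^ 2 := ⟨_, rfl⟩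
  have hB0 : 0 ≤ B := by
    rw [hBdef]
    exact div_nonneg (mul_nonneg (mul_nonneg (by norm_num) (sq_nonneg A)) hσ₂0) (sq_nonneg δ)
  obtain ⟨C₁, hC₁def⟩ : ∃ x, x = m * (2 * A / δ) ^ r := ⟨_, rfl⟩
  have hC₁0 : 0 ≤ C₁ := by
    rw [hC₁def]
    exact mul_nonneg hm0 (Real.rpow_nonneg (div_nonneg (by linarith) hδ.le) r)
  refine ⟨C₁ + Real.exp B, add_pos_of_nonneg_of_pos hC₁0 (Real.exp_pos B), ?_⟩
  intro J hJ
  obtain ⟨Jr, hJrdef⟩ : ∃ x, x = (J : ℝ) := ⟨_, rfl⟩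
  rw [← hJrdef]
  have hJpos : 0 < Jr := by rw [hJrdef]; exact_mod_cast hJ
  have hJr1 : 1 ≤ Jr := by rw [hJrdef]; exact_mod_cast hJ
  obtain ⟨L, hLdef⟩ : ∃ x, x = Real.log Jr := ⟨_, rfl⟩
  have hL0 : 0 ≤ L := by rw [hLdef]; exact Real.log_nonneg hJr1
  obtain ⟨M, hMdef⟩ : ∃ x, x = δ * Jr / (2 * A) := ⟨_, rfl⟩
  have hM : 0 < M := by
    rw [hMdef]; exact div_pos (mul_pos hδ hJpos) (by linarith)
  obtain ⟨lam, hlamdef⟩ : ∃ x, x = A * L / (δ * Jr) := ⟨_, rfl⟩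
  have hlam : 0 ≤ lam := by
    rw [hlamdef]
    exact div_nonneg (mul_nonneg hA0.le hL0) (mul_nonneg hδ.le hJpos.le)
  obtain ⟨W, hWdef⟩ : ∃ x, x = fun (j : ℕ) (ω : Ω) => min (Z j ω) M := ⟨_, rfl⟩
  have hWmeas : ∀ j, Measurable (W j) := by
    intro j; rw [hWdef]; exact (hmeas j).min measurable_const
  have hWle : ∀ j ω, W j ω ≤ M := by
    intro j ω; rw [hWdef]; exact min_le_right _ _
  -- event splitting
  set U := ⋃ j ∈ Finset.range J, {ω | M < Z j ω} with hUdef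
  set V := {ω | Jr * R ≤ (∑ j ∈ Finset.range J, W j) ω} with hVdef
  have hsplit : {ω | R ≤ Jr⁻¹ * ∑ j ∈ Finset.range J, Z j ω} ⊆ U ∪ V := by
    intro ω hω
    simp only [Set.mem_setOf_eq] at hω
    by_cases hc : ∀ j ∈ Finset.range J, Z j ω ≤ M
    · right
      simp only [hVdef, Set.mem_setOf_eq, Finset.sum_apply]
      have hsum : ∑ j ∈ Finset.range J, W j ω = ∑ j ∈ Finset.range J, Z j ω := by
        refine Finset.sum_congr rfl fun j hj => ?_
        rw [hWdef]
        exact min_eq_left (hc j hj)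
      rw [hsum]
      have h1 : Jr * R ≤ Jr * (Jr⁻¹ * ∑ j ∈ Finset.range J, Z j ω) :=
        mul_le_mul_of_nonneg_left hω hJpos.le
      have h2 : Jr * Jr⁻¹ = 1 := mul_inv_cancel₀ hJpos.ne'
      calc Jr * R ≤ Jr * (Jr⁻¹ * ∑ j ∈ Finset.range J, Z j ω) := h1
        _ = ∑ j ∈ Finset.range J, Z j ω := by rw [← mul_assoc, h2, one_mul]
    · left
      push_neg at hc
      obtain ⟨j, hj, hjM⟩ := hc
      exact Set.mem_biUnion hj hjM
  have hPU : P U ≤ ENNReal.ofReal (C₁ * Jr ^ (-(r / 2))) := by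
    have h1 : P U ≤ ∑ j ∈ Finset.range J, P {ω | M < Z j ω} :=
      measure_biUnion_finset_le _ _
    have h2 : ∀ j, P {ω | M < Z j ω} = P {ω | M < Z 0 ω} := by
      intro j
      have he : {ω | M < Z j ω} = Z j ⁻¹' Set.Ioi M := rfl
      rw [he, ← Measure.map_apply (hmeas j) measurableSet_Ioi, (hident j).map_eq,
        Measure.map_apply (hmeas 0) measurableSet_Ioi]
      rfl
    have h3 : P {ω | M < Z 0 ω} ≤ ENNReal.ofReal (m / M ^ r) := by
      rw [hmdef]
      exact tail_prob_le P (hmeas 0) (by linarith : (0:ℝ) < r) hM hmom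
    have h4 : P U ≤ (J : ℝ≥0∞) * ENNReal.ofReal (m / M ^ r) := by
      calc P U ≤ ∑ j ∈ Finset.range J, P {ω | M < Z j ω} := h1
        _ = ∑ _j ∈ Finset.range J, P {ω | M < Z 0 ω} := Finset.sum_congr rfl fun j _ => h2 j
        _ = (J : ℝ≥0∞) * P {ω | M < Z 0 ω} := by
            rw [Finset.sum_const, Finset.card_range, nsmul_eq_mul]
        _ ≤ (J : ℝ≥0∞) * ENNReal.ofReal (m / M ^ r) := mul_le_mul_right h3 _
    have h5 : (J : ℝ≥0∞) * ENNReal.ofReal (m / M ^ r) = ENNReal.ofReal (Jr * (m / M ^ r)) := by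
      rw [hJrdef, ENNReal.ofReal_mul (Nat.cast_nonneg J), ENNReal.ofReal_natCast]
    rw [h5] at h4
    refine h4.trans (ENNReal.ofReal_le_ofReal ?_)
    -- real inequality
    have hMr : M ^ r = (δ / (2 * A)) ^ r * Jr ^ r := by
      rw [← Real.mul_rpow (div_nonneg hδ.le (by linarith)) hJpos.le, hMdef]
      congr 1
      field_simp
    have hfact : Jr * (m / M ^ r) = C₁ * (Jr * Jr ^ (-r)) := by
      rw [hMr, hC₁def, Real.rpow_neg hJpos.le]
      have h2A : (2 * A / δ) ^ r = ((δ / (2 * A)) ^ r)⁻¹ := by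
        rw [← Real.inv_rpow (div_nonneg hδ.le (by linarith)), inv_div]
      rw [h2A]
      have hp1 : (0:ℝ) < (δ / (2 * A)) ^ r :=
        Real.rpow_pos_of_pos (div_pos hδ (by linarith)) r
      have hp2 : (0:ℝ) < Jr ^ r := Real.rpow_pos_of_pos hJpos r
      field_simp
    rw [hfact]
    have hexp : Jr * Jr ^ (-r) = Jr ^ (1 - r) := by
      rw [show (1 : ℝ) - r = 1 + (-r) by ring, Real.rpow_add hJpos, Real.rpow_one]
    rw [hexp]
    have hle : Jr ^ (1 - r) ≤ Jr ^ (-(r / 2)) :=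
      Real.rpow_le_rpow_of_exponent_le hJr1 (by linarith)
    exact mul_le_mul_of_nonneg_left hle hC₁0
  -- Chernoff part
  have hPV : P V ≤ ENNReal.ofReal (Real.exp B * Jr ^ (-(r / 2))) := by
    have hWZ : ∀ ω, W 0 ω = min (Z 0 ω) M := by intro ω; rw [hWdef]
    have hWbd : ∀ ω, ‖W 0 ω‖ ≤ |Z 0 ω| + M := by
      intro ω
      rw [hWZ ω]
      rcases le_total (Z 0 ω) M with h | h
      · rw [min_eq_left h, Real.norm_eq_abs]
        linarith [abs_nonneg (Z 0 ω), hM.le]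
      · rw [min_eq_right h, Real.norm_eq_abs, abs_of_pos hM]
        linarith [abs_nonneg (Z 0 ω)]
    have intW : Integrable (W 0) P := by
      refine Integrable.mono' (hZ0.abs.add (integrable_const M)) ((hWmeas 0).aestronglyMeasurable)
        (Filter.Eventually.of_forall ?_)
      intro ω
      simpa using hWbd ω
    have intW2 : Integrable (fun ω => W 0 ω ^ 2) P := by
      refine Integrable.mono' (hZ0sq.add (integrable_const (M ^ 2)))
        (((hWmeas 0).pow_const 2).aestronglyMeasurable) (Filter.Eventually.of_forall ?_)
      intro ω
      simp only [Pi.add_apply]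
      rw [Real.norm_eq_abs, abs_of_nonneg (sq_nonneg _), hWZ ω]
      rcases le_total (Z 0 ω) M with h | h
      · rw [min_eq_left h]
        linarith [sq_nonneg M]
      · rw [min_eq_right h]
        linarith [sq_nonneg (Z 0 ω)]
    have hEW : ∫ ω, W 0 ω ∂P ≤ μ₁ := by
      rw [hμ₁]
      apply integral_mono intW hZ0.abs
      intro ω
      rw [hWZ ω]
      exact le_trans (min_le_left _ _) (le_abs_self _)
    have hEW2 : ∫ ω, W 0 ω ^ 2 ∂P ≤ σ₂ := by
      rw [hσ₂def]
      apply integral_mono intW2 hZ0sq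
      intro ω
      show W 0 ω ^ 2 ≤ Z 0 ω ^ 2
      rw [hWZ ω]
      rcases le_total (Z 0 ω) M with h | h
      · rw [min_eq_left h]
      · rw [min_eq_right h]
        exact pow_le_pow_left₀ hM.le h 2
    obtain ⟨K, hKdef⟩ : ∃ x, x = Real.exp (lam * M) := ⟨_, rfl⟩
    have hK1 : 1 ≤ K := by
      rw [hKdef]; exact Real.one_le_exp (mul_nonneg hlam hM.le)
    have hK0 : 0 < K := lt_of_lt_of_le one_pos hK1
    obtain ⟨c₂, hc₂def⟩ : ∃ x, x = lam ^ 2 * K / 2 := ⟨_, rfl⟩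
    have hc₂0 : 0 ≤ c₂ := by
      rw [hc₂def]
      exact div_nonneg (mul_nonneg (sq_nonneg lam) hK0.le) (by norm_num)
    -- pointwise bound
    have hptw : ∀ ω, Real.exp (lam * W 0 ω) ≤ 1 + lam * W 0 ω + c₂ * W 0 ω ^ 2 := by
      intro ω
      have h1 : lam * W 0 ω ≤ lam * M := mul_le_mul_of_nonneg_left (hWle 0 ω) hlam
      have h2 := exp_le_quadratic (mul_nonneg hlam hM.le) h1
      rw [← hKdef] at h2
      calc Real.exp (lam * W 0 ω)
          ≤ 1 + lam * W 0 ω + (lam * W 0 ω) ^ 2 / 2 * K := h2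
        _ = 1 + lam * W 0 ω + c₂ * W 0 ω ^ 2 := by rw [hc₂def]; ring
    have intexp : Integrable (fun ω => Real.exp (lam * W 0 ω)) P := by
      refine Integrable.mono' (integrable_const K)
        (((hWmeas 0).const_mul lam).exp.aestronglyMeasurable)
        (Filter.Eventually.of_forall ?_)
      intro ω
      rw [Real.norm_eq_abs, abs_of_pos (Real.exp_pos _), hKdef]
      exact Real.exp_le_exp.2 (mul_le_mul_of_nonneg_left (hWle 0 ω) hlam)
    -- mgf bound
    have hmgf0 : mgf (W 0) P lam ≤ Real.exp (lam * μ₁ + c₂ * σ₂) := by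
      have step1 : mgf (W 0) P lam ≤ ∫ ω, (1 + lam * W 0 ω + c₂ * W 0 ω ^ 2) ∂P := by
        have i4 : Integrable (fun ω => 1 + lam * W 0 ω + c₂ * W 0 ω ^ 2) P :=
          ((integrable_const (1:ℝ)).add (intW.const_mul lam)).add (intW2.const_mul c₂)
        exact integral_mono intexp i4 hptw
      have step2 : ∫ ω, (1 + lam * W 0 ω + c₂ * W 0 ω ^ 2) ∂P
          = 1 + lam * ∫ ω, W 0 ω ∂P + c₂ * ∫ ω, W 0 ω ^ 2 ∂P := by
        have i1 : Integrable (fun ω => 1 + lam * W 0 ω) P :=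
          (integrable_const (1:ℝ)).add (intW.const_mul lam)
        have i2 : Integrable (fun ω => lam * W 0 ω) P := intW.const_mul lam
        have i3 : Integrable (fun ω => c₂ * W 0 ω ^ 2) P := intW2.const_mul c₂
        rw [integral_add i1 i3, integral_add (integrable_const (1:ℝ)) i2,
          integral_const, integral_const_mul, integral_const_mul]
        simp
      have step3 : 1 + lam * ∫ ω, W 0 ω ∂P + c₂ * ∫ ω, W 0 ω ^ 2 ∂P
          ≤ 1 + (lam * μ₁ + c₂ * σ₂) := by
        have e1 := mul_le_mul_of_nonneg_left hEW hlam
        have e2 := mul_le_mul_of_nonneg_left hEW2 hc₂0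
        linarith
      have step4 : 1 + (lam * μ₁ + c₂ * σ₂) ≤ Real.exp (lam * μ₁ + c₂ * σ₂) := by
        linarith [Real.add_one_le_exp (lam * μ₁ + c₂ * σ₂)]
      linarith [step1, step2.le, step2.ge]
    -- identical distribution of truncations
    have hWident : ∀ j, mgf (W j) P lam = mgf (W 0) P lam := by
      intro j
      have hmin : Measurable (fun x : ℝ => min x M) := measurable_id.min measurable_const
      have hexp : Measurable (fun x : ℝ => Real.exp (lam * x)) := by fun_prop
      have h := (((hident j).comp hmin).comp hexp).integral_eq
      rw [hWdef]
      simpa [mgf, Function.comp] using h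
    have hWindep : iIndepFun W P := by
      rw [hWdef]
      exact hindep.comp (fun _ => fun x => min x M) (fun _ => measurable_id.min measurable_const)
    have hmgfsum : mgf (∑ j ∈ Finset.range J, W j) P lam = mgf (W 0) P lam ^ J := by
      rw [hWindep.mgf_sum hWmeas]
      rw [Finset.prod_congr rfl (fun j _ => hWident j), Finset.prod_const, Finset.card_range]
    -- integrability of exp of sum
    have intexpsum : Integrable (fun ω => Real.exp (lam * (∑ j ∈ Finset.range J, W j) ω)) P := by
      have hsummeas : Measurable (fun ω => ∑ j ∈ Finset.range J, W j ω) :=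
        Finset.measurable_sum _ fun j _ => hWmeas j
      have hexpmeas : Measurable (fun ω => Real.exp (lam * (∑ j ∈ Finset.range J, W j) ω)) := by
        simp only [Finset.sum_apply]
        exact (hsummeas.const_mul lam).exp
      refine Integrable.mono' (integrable_const (Real.exp (lam * (Jr * M))))
        hexpmeas.aestronglyMeasurable (Filter.Eventually.of_forall ?_)
      intro ω
      rw [Real.norm_eq_abs, abs_of_pos (Real.exp_pos _)]
      apply Real.exp_le_exp.2
      apply mul_le_mul_of_nonneg_left _ hlam
      simp only [Finset.sum_apply]
      calc ∑ j ∈ Finset.range J, W j ω ≤ ∑ _j ∈ Finset.range J, M :=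
            Finset.sum_le_sum fun j _ => hWle j ω
        _ = Jr * M := by rw [Finset.sum_const, Finset.card_range, nsmul_eq_mul, hJrdef]
    have hcher := measure_ge_le_exp_mul_mgf (μ := P) (X := ∑ j ∈ Finset.range J, W j)
      (Jr * R) hlam intexpsum
    -- numeric computation
    obtain ⟨v, hvdef⟩ : ∃ x, x = Real.exp (L / 4) := ⟨_, rfl⟩
    have hv1 : 1 ≤ v := by
      rw [hvdef]; exact Real.one_le_exp (div_nonneg hL0 (by norm_num))
    have hveq : v ^ 4 = Jr := by
      rw [hvdef, ← Real.exp_nat_mul]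
      norm_num
      rw [show (4 : ℝ) * (L / 4) = L by ring, hLdef, Real.exp_log hJpos]
    have hKv : K = v ^ 2 := by
      rw [hKdef, hvdef, ← Real.exp_nat_mul]
      congr 1
      push_cast
      rw [hlamdef, hMdef]
      field_simp
      ring
    have hLv : L ≤ 4 * v := by
      have h := Real.add_one_le_exp (L / 4)
      rw [← hvdef] at h
      linarith
    have hterm : Jr * (lam * μ₁ + c₂ * σ₂) - lam * (Jr * R) ≤ -(A * L) + B := by
      have hlamδ : lam * (Jr * δ) = A * L := by
        rw [hlamdef]
        field_simp
      have hδJ : -(lam * (Jr * R)) + Jr * (lam * μ₁) = -(A * L) := by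
        have hexpand : -(lam * (Jr * R)) + Jr * (lam * μ₁) = -(lam * (Jr * (R - μ₁))) := by ring
        rw [hexpand, ← hδdef, hlamδ]
      have hquad : Jr * (c₂ * σ₂) ≤ B := by
        have heq : Jr * (c₂ * σ₂) = A ^ 2 * σ₂ / (2 * δ ^ 2) * (L ^ 2 * K / Jr) := by
          rw [hc₂def, hlamdef]
          field_simp
        have h16 : L ^ 2 * K / Jr ≤ 16 := by
          rw [hKv, ← hveq, div_le_iff₀ (pow_pos (lt_of_lt_of_le one_pos hv1) 4)]
          have hL2 : L ^ 2 ≤ (4 * v) ^ 2 := pow_le_pow_left₀ hL0 hLv 2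
          have hstep : L ^ 2 * v ^ 2 ≤ (4 * v) ^ 2 * v ^ 2 :=
            mul_le_mul_of_nonneg_right hL2 (sq_nonneg v)
          calc L ^ 2 * v ^ 2 ≤ (4 * v) ^ 2 * v ^ 2 := hstep
            _ = 16 * v ^ 4 := by ring
        rw [heq, hBdef]
        calc A ^ 2 * σ₂ / (2 * δ ^ 2) * (L ^ 2 * K / Jr)
            ≤ A ^ 2 * σ₂ / (2 * δ ^ 2) * 16 := by
              apply mul_le_mul_of_nonneg_left h16
              exact div_nonneg (mul_nonneg (sq_nonneg A) hσ₂0) (by positivity)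
          _ = 8 * A ^ 2 * σ₂ / δ ^ 2 := by
              field_simp
              ring
      have hexpand2 : Jr * (lam * μ₁ + c₂ * σ₂) - lam * (Jr * R)
          = (-(lam * (Jr * R)) + Jr * (lam * μ₁)) + Jr * (c₂ * σ₂) := by ring
      rw [hexpand2, hδJ]
      linarith [hquad]
    have hfinal : (P V).toReal ≤ Real.exp B * Jr ^ (-(r / 2)) := by
      have h1 : (P V).toReal
          ≤ Real.exp (-lam * (Jr * R)) * mgf (∑ j ∈ Finset.range J, W j) P lam := hcher
      have h2 : mgf (∑ j ∈ Finset.range J, W j) P lam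
          ≤ Real.exp (Jr * (lam * μ₁ + c₂ * σ₂)) := by
        rw [hmgfsum]
        calc mgf (W 0) P lam ^ J ≤ Real.exp (lam * μ₁ + c₂ * σ₂) ^ J :=
              pow_le_pow_left₀ mgf_nonneg hmgf0 J
          _ = Real.exp (Jr * (lam * μ₁ + c₂ * σ₂)) := by
              rw [← Real.exp_nat_mul, hJrdef]
      have h3 : Real.exp (-lam * (Jr * R)) * mgf (∑ j ∈ Finset.range J, W j) P lam
          ≤ Real.exp (-lam * (Jr * R)) * Real.exp (Jr * (lam * μ₁ + c₂ * σ₂)) :=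
        mul_le_mul_of_nonneg_left h2 (Real.exp_nonneg _)
      have h4 : Real.exp (-lam * (Jr * R)) * Real.exp (Jr * (lam * μ₁ + c₂ * σ₂))
          = Real.exp (Jr * (lam * μ₁ + c₂ * σ₂) - lam * (Jr * R)) := by
        rw [← Real.exp_add]
        congr 1
        ring
      have h5 : Real.exp (Jr * (lam * μ₁ + c₂ * σ₂) - lam * (Jr * R))
          ≤ Real.exp (-(A * L) + B) := Real.exp_le_exp.2 hterm
      have h6 : Real.exp (-(A * L) + B) = Real.exp B * Jr ^ (-(r / 2)) := by
        rw [Real.exp_add, Real.rpow_def_of_pos hJpos, ← hLdef, ← hAdef]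
        rw [show L * -A = -(A * L) by ring]
        ring
      linarith
    rw [← ENNReal.ofReal_toReal (measure_ne_top P V)]
    exact ENNReal.ofReal_le_ofReal hfinal
  calc P {ω | R ≤ Jr⁻¹ * ∑ j ∈ Finset.range J, Z j ω} ≤ P (U ∪ V) := measure_mono hsplit
    _ ≤ P U + P V := measure_union_le U V
    _ ≤ ENNReal.ofReal (C₁ * Jr ^ (-(r / 2))) + ENNReal.ofReal (Real.exp B * Jr ^ (-(r / 2))) :=
        add_le_add hPU hPV
    _ = ENNReal.ofReal ((C₁ + Real.exp B) * Jr ^ (-(r / 2))) := by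
        rw [← ENNReal.ofReal_add (mul_nonneg hC₁0 (Real.rpow_nonneg hJpos.le _))
          (mul_nonneg (Real.exp_nonneg B) (Real.rpow_nonneg hJpos.le _))]
        congr 1
        ring
end

section
/- Let V be a finite-dimensional real normed vector space, and let g : ℝ^d → V and h : ℝ^d → (0, ∞) be functions such that for some ς ≥ 0 and L > 0, max(‖g(x) − g(y)‖, |h(x) − h(y)|) ≤ L (1 + |x| + |y|)^ς |x − y| for all x, y ∈ ℝ^d. Then for all p ≥ ς + 1 and all R > 0 there exists a constant C = C(p, R) > 0 such that for all probability measures μ, ν ∈ P_{p,R}(ℝ^d), ‖ (∫ g dμ)/(∫ h dμ) − (∫ g dν)/(∫ h dν) ‖ ≤ C · W_p(μ, ν). -/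
open MeasureTheory ENNReal
open scoped NNReal

noncomputable section

/-- Euclidean space `ℝ^d`. -/
abbrev Rd (d : ℕ) := EuclideanSpace ℝ (Fin d)

/-- The weight function `x ↦ exp (-β f x)`. -/
def wFn (β : ℝ) {d : ℕ} (f : Rd d → ℝ) (x : Rd d) : ℝ := Real.exp (-β * f x)

/-- The weighted mean `M_β(μ) = (∫ x e^{-β f x} dμ) / (∫ e^{-β f x} dμ)`. -/
def wMean (β : ℝ) {d : ℕ} (f : Rd d → ℝ) (μ : Measure (Rd d)) : Rd d :=
  (∫ x, wFn β f x ∂μ)⁻¹ • ∫ x, wFn β f x • x ∂μ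

/-- The weighted covariance `C_β(μ)`, a `d × d` matrix. -/
def wCov (β : ℝ) {d : ℕ} (f : Rd d → ℝ) (μ : Measure (Rd d)) :
    Matrix (Fin d) (Fin d) ℝ := fun i j =>
  (∫ x, wFn β f x ∂μ)⁻¹ *
    ∫ x, wFn β f x * ((x i - wMean β f μ i) * (x j - wMean β f μ j)) ∂μ

/-- Frobenius norm of a matrix. -/
def frobNorm {m n : ℕ} (A : Matrix (Fin m) (Fin n) ℝ) : ℝ :=
  Real.sqrt (∑ i, ∑ j, (A i j) ^ 2)

/-- `S` is the (unique) positive semidefinite square root of `A`. -/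
def IsPSDSqrt {d : ℕ} (S A : Matrix (Fin d) (Fin d) ℝ) : Prop :=
  S.PosSemidef ∧ S * S = A

/-- `μ ∈ P_{p,R}`: the `p`-th moment of `μ` is bounded, `(∫ |x|^p dμ)^{1/p} ≤ R`. -/
def MomLE (p R : ℝ) {d : ℕ} (μ : Measure (Rd d)) : Prop :=
  ∫⁻ x, (‖x‖₊ : ℝ≥0∞) ^ p ∂μ ≤ ENNReal.ofReal (R ^ p)

/-- `μ ∈ P_p`: the `p`-th moment of `μ` is finite. -/
def MomFin (p : ℝ) {d : ℕ} (μ : Measure (Rd d)) : Prop :=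
  ∫⁻ x, (‖x‖₊ : ℝ≥0∞) ^ p ∂μ < ⊤

/-- The Wasserstein-`p` distance between two probability measures on `ℝ^d`:
the infimum over couplings `π` of `μ` and `ν` of `(∬ |x - y|^p dπ)^{1/p}`. -/
def Wp (p : ℝ) {d : ℕ} (μ ν : Measure (Rd d)) : ℝ :=
  (sInf {c : ℝ≥0∞ | ∃ π : Measure (Rd d × Rd d),
      π.map Prod.fst = μ ∧ π.map Prod.snd = ν ∧
      c = (∫⁻ z, (‖z.1 - z.2‖₊ : ℝ≥0∞) ^ p ∂π) ^ (1 / p)}).toReal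

/-- `f_* = inf f`. -/
def fStar {d : ℕ} (f : Rd d → ℝ) : ℝ := sInf (Set.range f)

/-- The class `A(s, ℓ, u)` of objective functions: `f` is bounded from below,
locally Lipschitz with growth exponent `s`, and `f - inf f` grows at least like
`|x|^ℓ` and at most like `|x|^u`. -/
structure ClassA {d : ℕ} (s ℓ u : ℝ) (f : Rd d → ℝ) : Prop where
  bddBelow : BddBelow (Set.range f)
  lip : ∃ Lf > 0, ∀ x y : Rd d, |f x - f y| ≤ Lf * (1 + ‖x‖ + ‖y‖) ^ s * ‖x - y‖
  growth_lower : ∃ cl > 0, ∃ Cl > 0, ∀ x : Rd d, cl * ‖x‖ ^ ℓ - Cl ≤ f x - fStar f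
  growth_upper : ∃ cu > 0, ∃ Cu > 0, ∀ x : Rd d, f x - fStar f ≤ cu * ‖x‖ ^ u + Cu

/-- `p_M(s, ℓ) = s + 2` if `ℓ = 0`, and `1` if `ℓ > 0`. -/
def pM (s ℓ : ℝ) : ℝ := if ℓ = 0 then s + 2 else 1

/-- `p_C(s, ℓ) = s + 3` if `ℓ = 0`, and `1` if `ℓ > 0`. -/
def pC (s ℓ : ℝ) : ℝ := if ℓ = 0 then s + 3 else 1

namespace RatioAux

variable {d : ℕ}


/-- continuity from the local Lipschitz bound -/
lemma cont_of_lip {W : Type*} [NormedAddCommGroup W] (φ : Rd d → W) (L ς : ℝ)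
    (hφ : ∀ x y, ‖φ x - φ y‖ ≤ L * (1 + ‖x‖ + ‖y‖) ^ ς * ‖x - y‖) : Continuous φ := by
  rw [continuous_iff_continuousAt]
  intro x₀
  unfold ContinuousAt
  rw [← tendsto_sub_nhds_zero_iff]
  have hb : Filter.Tendsto (fun y : Rd d => L * (1 + ‖y‖ + ‖x₀‖) ^ ς * ‖y - x₀‖)
      (nhds x₀) (nhds 0) := by
    have h1 : Continuous (fun y : Rd d => L * (1 + ‖y‖ + ‖x₀‖) ^ ς * ‖y - x₀‖) := by
      apply Continuous.mul
      · apply continuous_const.mul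
        apply Continuous.rpow_const
        · exact (continuous_const.add continuous_norm).add continuous_const
        · intro x; left; positivity
      · exact (continuous_id.sub continuous_const).norm
    have h2 := h1.tendsto x₀
    simpa using h2
  exact squeeze_zero_norm (fun y => hφ y x₀) hb

/-- growth bound from the Lipschitz bound -/
lemma growth_of_lip {W : Type*} [NormedAddCommGroup W] (φ : Rd d → W) (L ς p : ℝ)
    (hL : 0 ≤ L) (hς : 0 ≤ ς) (hp : ς + 1 ≤ p)
    (hφ : ∀ x y, ‖φ x - φ y‖ ≤ L * (1 + ‖x‖ + ‖y‖) ^ ς * ‖x - y‖) (x : Rd d) :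
    ‖φ x‖ ≤ ‖φ 0‖ + L * (1 + ‖x‖) ^ p := by
  have h0 : ‖φ x‖ - ‖φ 0‖ ≤ ‖φ x - φ 0‖ := norm_sub_norm_le _ _
  have h1 := hφ x 0
  simp only [norm_zero, add_zero, sub_zero] at h1
  have hbase : (1:ℝ) ≤ 1 + ‖x‖ := by linarith [norm_nonneg x]
  have h2 : (1 + ‖x‖) ^ ς * ‖x‖ ≤ (1 + ‖x‖) ^ p := by
    calc (1 + ‖x‖) ^ ς * ‖x‖ ≤ (1 + ‖x‖) ^ ς * (1 + ‖x‖) := by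
          apply mul_le_mul_of_nonneg_left (by linarith [norm_nonneg x])
          positivity
      _ = (1 + ‖x‖) ^ (ς + 1) := by
          rw [Real.rpow_add_one (by positivity : (0:ℝ) < 1 + ‖x‖).ne']
      _ ≤ (1 + ‖x‖) ^ p := Real.rpow_le_rpow_of_exponent_le hbase hp
  nlinarith [norm_nonneg (φ 0), norm_nonneg x]

/-- `(a+b+c)^p ≤ 2^p 2^p (a^p + b^p + c^p)` in `ℝ≥0∞`. -/
lemma rpow_add3_le (a b c : ℝ≥0∞) {p : ℝ} (hp : 1 ≤ p) :
    (a + b + c) ^ p ≤ 2 ^ p * 2 ^ p * (a ^ p + b ^ p + c ^ p) := by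
  have h2 : (2:ℝ≥0∞) ^ (p-1) ≤ 2 ^ p :=
    ENNReal.rpow_le_rpow_of_exponent_le (by norm_num) (by linarith)
  have h1 : (1:ℝ≥0∞) ≤ 2 ^ p := by
    calc (1:ℝ≥0∞) = 2 ^ (0:ℝ) := by rw [ENNReal.rpow_zero]
      _ ≤ 2 ^ p := ENNReal.rpow_le_rpow_of_exponent_le (by norm_num) (by linarith)
  calc (a + b + c) ^ p ≤ 2 ^ (p-1) * ((a+b) ^ p + c ^ p) :=
        ENNReal.rpow_add_le_mul_rpow_add_rpow _ _ hp
    _ ≤ 2 ^ p * ((2 ^ (p-1) * (a^p + b^p)) + c ^ p) := by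
        gcongr
        exact ENNReal.rpow_add_le_mul_rpow_add_rpow _ _ hp
    _ ≤ 2 ^ p * ((2 ^ p * (a^p + b^p)) + 2 ^ p * c ^ p) := by
        gcongr
        calc c ^ p = 1 * c ^ p := (one_mul _).symm
          _ ≤ 2 ^ p * c ^ p := by gcongr
    _ = 2 ^ p * 2 ^ p * (a ^ p + b ^ p + c ^ p) := by ring

/-- `x^e ≤ x + 1` for `0 ≤ e ≤ 1` in `ℝ≥0∞`. -/
lemma rpow_le_add_one (x : ℝ≥0∞) {e : ℝ} (he0 : 0 ≤ e) (he1 : e ≤ 1) : x ^ e ≤ x + 1 := by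
  rcases le_total x 1 with hx | hx
  · calc x ^ e ≤ 1 ^ e := ENNReal.rpow_le_rpow hx he0
      _ = 1 := ENNReal.one_rpow e
      _ ≤ x + 1 := le_add_self
  · calc x ^ e ≤ x ^ (1:ℝ) := ENNReal.rpow_le_rpow_of_exponent_le hx he1
      _ = x := ENNReal.rpow_one x
      _ ≤ x + 1 := le_self_add

/-- lintegral bound for `(1+‖ξ a‖)^p` -/
lemma lint_one_add_pow_le {α : Type*} [MeasurableSpace α] (π : Measure α)
    [IsProbabilityMeasure π] (ξ : α → Rd d) {p R : ℝ} (hp : 1 ≤ p)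
    (hmom : ∫⁻ a, (‖ξ a‖₊ : ℝ≥0∞) ^ p ∂π ≤ ENNReal.ofReal (R ^ p)) :
    ∫⁻ a, ((1:ℝ≥0∞) + ‖ξ a‖₊) ^ p ∂π ≤ 2 ^ p * (1 + ENNReal.ofReal (R ^ p)) := by
  have h2 : (2:ℝ≥0∞) ^ (p-1) ≤ 2 ^ p :=
    ENNReal.rpow_le_rpow_of_exponent_le (by norm_num) (by linarith)
  have hpt : ∀ a, ((1:ℝ≥0∞) + ‖ξ a‖₊) ^ p ≤ 2 ^ p * (1 + (‖ξ a‖₊ : ℝ≥0∞) ^ p) := by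
    intro a
    calc ((1:ℝ≥0∞) + ‖ξ a‖₊) ^ p ≤ 2 ^ (p-1) * (1 ^ p + (‖ξ a‖₊ : ℝ≥0∞) ^ p) :=
          ENNReal.rpow_add_le_mul_rpow_add_rpow _ _ hp
      _ = 2 ^ (p-1) * (1 + (‖ξ a‖₊ : ℝ≥0∞) ^ p) := by rw [ENNReal.one_rpow]
      _ ≤ 2 ^ p * (1 + (‖ξ a‖₊ : ℝ≥0∞) ^ p) := by gcongr
  calc ∫⁻ a, ((1:ℝ≥0∞) + ‖ξ a‖₊) ^ p ∂π
      ≤ ∫⁻ a, 2 ^ p * (1 + (‖ξ a‖₊ : ℝ≥0∞) ^ p) ∂π := lintegral_mono hpt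
    _ = 2 ^ p * ∫⁻ a, (1 + (‖ξ a‖₊ : ℝ≥0∞) ^ p) ∂π := by
        rw [lintegral_const_mul' _ _ (ENNReal.rpow_ne_top_of_nonneg (by linarith) (by norm_num))]
    _ = 2 ^ p * (1 + ∫⁻ a, (‖ξ a‖₊ : ℝ≥0∞) ^ p ∂π) := by
        rw [lintegral_add_left measurable_const]
        simp
    _ ≤ 2 ^ p * (1 + ENNReal.ofReal (R ^ p)) := by gcongr



/-- key rewrite: `ofReal ((1+‖x‖)^p) = (1 + ‖x‖₊)^p` -/
lemma ofReal_one_add_pow (x : Rd d) {p : ℝ} (hp : 0 ≤ p) :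
    ENNReal.ofReal ((1 + ‖x‖) ^ p) = ((1:ℝ≥0∞) + ‖x‖₊) ^ p := by
  rw [← ENNReal.ofReal_rpow_of_nonneg (by positivity) hp,
    ENNReal.ofReal_add zero_le_one (norm_nonneg x), ENNReal.ofReal_one,
    ofReal_norm, enorm_eq_nnnorm]

/-- integrability of `φ ∘ ξ` from growth and moment bounds -/
lemma integrable_growth {α : Type*} [MeasurableSpace α] {π : Measure α}
    [IsProbabilityMeasure π] {W : Type*} [NormedAddCommGroup W] (φ : Rd d → W)
    {ξ : α → Rd d} (hmeas : AEStronglyMeasurable (fun a => φ (ξ a)) π)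
    {A B p R : ℝ} (hA : 0 ≤ A) (hB : 0 ≤ B) (hp : 1 ≤ p)
    (hgrow : ∀ x, ‖φ x‖ ≤ A + B * (1 + ‖x‖) ^ p)
    (hmom : ∫⁻ a, (‖ξ a‖₊ : ℝ≥0∞) ^ p ∂π ≤ ENNReal.ofReal (R ^ p)) :
    Integrable (fun a => φ (ξ a)) π ∧
      ∫⁻ a, ENNReal.ofReal ‖φ (ξ a)‖ ∂π
        ≤ ENNReal.ofReal A + ENNReal.ofReal B * (2 ^ p * (1 + ENNReal.ofReal (R ^ p))) := by
  have hbound : ∫⁻ a, ENNReal.ofReal ‖φ (ξ a)‖ ∂π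
      ≤ ENNReal.ofReal A + ENNReal.ofReal B * (2 ^ p * (1 + ENNReal.ofReal (R ^ p))) := by
    have hpt : ∀ a, ENNReal.ofReal ‖φ (ξ a)‖
        ≤ ENNReal.ofReal A + ENNReal.ofReal B * ((1:ℝ≥0∞) + ‖ξ a‖₊) ^ p := by
      intro a
      calc ENNReal.ofReal ‖φ (ξ a)‖ ≤ ENNReal.ofReal (A + B * (1 + ‖ξ a‖) ^ p) :=
            ENNReal.ofReal_le_ofReal (hgrow _)
        _ = ENNReal.ofReal A + ENNReal.ofReal (B * (1 + ‖ξ a‖) ^ p) :=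
            ENNReal.ofReal_add hA (by positivity)
        _ = ENNReal.ofReal A + ENNReal.ofReal B * ENNReal.ofReal ((1 + ‖ξ a‖) ^ p) := by
            rw [ENNReal.ofReal_mul hB]
        _ = ENNReal.ofReal A + ENNReal.ofReal B * ((1:ℝ≥0∞) + ‖ξ a‖₊) ^ p := by
            rw [ofReal_one_add_pow _ (by linarith)]
    calc ∫⁻ a, ENNReal.ofReal ‖φ (ξ a)‖ ∂π
        ≤ ∫⁻ a, (ENNReal.ofReal A + ENNReal.ofReal B * ((1:ℝ≥0∞) + ‖ξ a‖₊) ^ p) ∂π :=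
          lintegral_mono hpt
      _ = ENNReal.ofReal A + ∫⁻ a, ENNReal.ofReal B * ((1:ℝ≥0∞) + ‖ξ a‖₊) ^ p ∂π := by
          rw [lintegral_add_left measurable_const]; simp
      _ = ENNReal.ofReal A + ENNReal.ofReal B * ∫⁻ a, ((1:ℝ≥0∞) + ‖ξ a‖₊) ^ p ∂π := by
          rw [lintegral_const_mul' _ _ ENNReal.ofReal_ne_top]
      _ ≤ _ := by gcongr; exact lint_one_add_pow_le π ξ hp hmom
  refine ⟨⟨hmeas, ?_⟩, hbound⟩
  rw [hasFiniteIntegral_iff_norm]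
  have h2top : (2:ℝ≥0∞) ^ p ≠ ⊤ := ENNReal.rpow_ne_top_of_nonneg (by linarith) (by norm_num)
  refine lt_of_le_of_lt hbound ?_
  rw [lt_top_iff_ne_top]
  refine ENNReal.add_ne_top.2 ⟨ENNReal.ofReal_ne_top, ?_⟩
  refine ENNReal.mul_ne_top ENNReal.ofReal_ne_top (ENNReal.mul_ne_top h2top ?_)
  exact ENNReal.add_ne_top.2 ⟨one_ne_top, ENNReal.ofReal_ne_top⟩

/-- ratio algebra -/
lemma ratio_bound {W : Type*} [NormedAddCommGroup W] [NormedSpace ℝ W] (a c : W)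
    (b e m G : ℝ) (hm : 0 < m) (hb : m ≤ b) (he : m ≤ e) (hc : ‖c‖ ≤ G) :
    ‖b⁻¹ • a - e⁻¹ • c‖ ≤ m⁻¹ * ‖a - c‖ + (G / m ^ 2) * |b - e| := by
  have hb0 : (0:ℝ) < b := lt_of_lt_of_le hm hb
  have he0 : (0:ℝ) < e := lt_of_lt_of_le hm he
  have key : b⁻¹ • a - e⁻¹ • c = b⁻¹ • (a - c) + (b⁻¹ - e⁻¹) • c := by
    rw [smul_sub, sub_smul]; abel
  rw [key]
  have hG0 : 0 ≤ G := le_trans (norm_nonneg c) hc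
  have h1 : ‖b⁻¹ • (a - c)‖ ≤ m⁻¹ * ‖a - c‖ := by
    rw [norm_smul, Real.norm_eq_abs, abs_of_pos (by positivity)]
    gcongr
  have h2 : ‖(b⁻¹ - e⁻¹) • c‖ ≤ (G / m ^ 2) * |b - e| := by
    rw [norm_smul, Real.norm_eq_abs]
    have heq : b⁻¹ - e⁻¹ = (e - b) / (b * e) := by field_simp
    have habs : |b⁻¹ - e⁻¹| ≤ |b - e| / m ^ 2 := by
      rw [heq, abs_div, abs_sub_comm e b, abs_of_pos (mul_pos hb0 he0)]
      gcongr
      nlinarith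
    calc |b⁻¹ - e⁻¹| * ‖c‖ ≤ (|b - e| / m ^ 2) * G := by
          apply mul_le_mul habs hc (norm_nonneg c) (by positivity)
      _ = (G / m ^ 2) * |b - e| := by ring
  calc ‖b⁻¹ • (a - c) + (b⁻¹ - e⁻¹) • c‖ ≤ ‖b⁻¹ • (a - c)‖ + ‖(b⁻¹ - e⁻¹) • c‖ :=
        norm_add_le _ _
    _ ≤ m⁻¹ * ‖a - c‖ + (G / m ^ 2) * |b - e| := add_le_add h1 h2
  


/-- the constant in the coupling bound -/
def Kc (p L R : ℝ) : ℝ≥0∞ :=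
  ENNReal.ofReal L *
    (2 ^ p * 2 ^ p * (1 + ENNReal.ofReal (R ^ p) + ENNReal.ofReal (R ^ p)) + 1)

lemma Kc_ne_top {p L R : ℝ} (hp : 1 ≤ p) : Kc p L R ≠ ⊤ := by
  have h2 : (2:ℝ≥0∞) ^ p ≠ ⊤ := ENNReal.rpow_ne_top_of_nonneg (by linarith) (by norm_num)
  unfold Kc
  refine ENNReal.mul_ne_top ENNReal.ofReal_ne_top ?_
  refine ENNReal.add_ne_top.2 ⟨?_, one_ne_top⟩
  exact ENNReal.mul_ne_top (ENNReal.mul_ne_top h2 h2)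
    (ENNReal.add_ne_top.2 ⟨ENNReal.add_ne_top.2 ⟨one_ne_top, ENNReal.ofReal_ne_top⟩,
      ENNReal.ofReal_ne_top⟩)

lemma Kc_pos {p L R : ℝ} (hL : 0 < L) : 0 < Kc p L R := by
  unfold Kc
  exact ENNReal.mul_pos (ENNReal.ofReal_pos.2 hL).ne'
    (ne_of_gt (lt_of_lt_of_le zero_lt_one le_add_self))

lemma ofReal_L_le_Kc {p L R : ℝ} (hL : 0 ≤ L) : ENNReal.ofReal L ≤ Kc p L R := by
  unfold Kc
  conv_lhs => rw [← mul_one (ENNReal.ofReal L)]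
  gcongr
  exact le_add_self

/-- the `E` function -/
def Efn (z : Rd d × Rd d) : ℝ≥0∞ := 1 + (‖z.1‖₊ : ℝ≥0∞) + (‖z.2‖₊ : ℝ≥0∞)

lemma one_le_Efn (z : Rd d × Rd d) : (1:ℝ≥0∞) ≤ Efn z := by
  unfold Efn
  calc (1:ℝ≥0∞) ≤ 1 + ‖z.1‖₊ := le_self_add
    _ ≤ 1 + ‖z.1‖₊ + ‖z.2‖₊ := le_self_add

lemma measurable_Efn : Measurable (Efn (d := d)) :=
  ((measurable_const.add (measurable_fst.nnnorm.coe_nnreal_ennreal)).add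
    (measurable_snd.nnnorm.coe_nnreal_ennreal))

lemma ofReal_lip_eq (L ς : ℝ) (hL : 0 ≤ L) (hς : 0 ≤ ς) (z : Rd d × Rd d) :
    ENNReal.ofReal (L * (1 + ‖z.1‖ + ‖z.2‖) ^ ς * ‖z.1 - z.2‖)
      = ENNReal.ofReal L * (Efn z) ^ ς * (‖z.1 - z.2‖₊ : ℝ≥0∞) := by
  rw [ENNReal.ofReal_mul (by positivity), ENNReal.ofReal_mul hL, ofReal_norm, enorm_eq_nnnorm]
  congr 2
  rw [← ENNReal.ofReal_rpow_of_nonneg (by positivity) hς]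
  congr 1
  unfold Efn
  rw [ENNReal.ofReal_add (by positivity) (norm_nonneg _),
    ENNReal.ofReal_add zero_le_one (norm_nonneg _), ENNReal.ofReal_one,
    ofReal_norm, ofReal_norm, enorm_eq_nnnorm, enorm_eq_nnnorm]

/-- bound for `∫⁻ Efn^p` -/
lemma lint_Efn_le (π : Measure (Rd d × Rd d)) [IsProbabilityMeasure π]
    {p R : ℝ} (hp : 1 ≤ p)
    (hmom1 : ∫⁻ z, (‖z.1‖₊ : ℝ≥0∞) ^ p ∂π ≤ ENNReal.ofReal (R ^ p))
    (hmom2 : ∫⁻ z, (‖z.2‖₊ : ℝ≥0∞) ^ p ∂π ≤ ENNReal.ofReal (R ^ p)) :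
    ∫⁻ z, (Efn z) ^ p ∂π
      ≤ 2 ^ p * 2 ^ p * (1 + ENNReal.ofReal (R ^ p) + ENNReal.ofReal (R ^ p)) := by
  have hpt : ∀ z : Rd d × Rd d, (Efn z) ^ p
      ≤ 2 ^ p * 2 ^ p * (1 + (‖z.1‖₊ : ℝ≥0∞) ^ p + (‖z.2‖₊ : ℝ≥0∞) ^ p) := by
    intro z
    have := rpow_add3_le 1 (‖z.1‖₊ : ℝ≥0∞) (‖z.2‖₊ : ℝ≥0∞) hp
    rwa [ENNReal.one_rpow] at this
  calc ∫⁻ z, (Efn z) ^ p ∂π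
      ≤ ∫⁻ z, 2 ^ p * 2 ^ p * (1 + (‖z.1‖₊ : ℝ≥0∞) ^ p + (‖z.2‖₊ : ℝ≥0∞) ^ p) ∂π :=
        lintegral_mono hpt
    _ = 2 ^ p * 2 ^ p *
        ∫⁻ z, (1 + (‖z.1‖₊ : ℝ≥0∞) ^ p + (‖z.2‖₊ : ℝ≥0∞) ^ p) ∂π := by
        rw [lintegral_const_mul' _ _ (ENNReal.mul_ne_top
          (ENNReal.rpow_ne_top_of_nonneg (by linarith) (by norm_num))
          (ENNReal.rpow_ne_top_of_nonneg (by linarith) (by norm_num)))]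
    _ = 2 ^ p * 2 ^ p *
        ((1 + ∫⁻ z, (‖z.1‖₊ : ℝ≥0∞) ^ p ∂π) + ∫⁻ z, (‖z.2‖₊ : ℝ≥0∞) ^ p ∂π) := by
        rw [lintegral_add_left (by
          exact measurable_const.add ((measurable_fst.nnnorm.coe_nnreal_ennreal).pow_const p)),
          lintegral_add_left measurable_const]
        simp
    _ ≤ 2 ^ p * 2 ^ p * (1 + ENNReal.ofReal (R ^ p) + ENNReal.ofReal (R ^ p)) := by
        gcongr

/-- Main coupling lintegral bound. -/
lemma lint_lip_bound (π : Measure (Rd d × Rd d)) [IsProbabilityMeasure π]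
    {p ς L R : ℝ} (hς : 0 ≤ ς) (hp : ς + 1 ≤ p) (hL : 0 < L) (hR : 0 < R)
    (hmom1 : ∫⁻ z, (‖z.1‖₊ : ℝ≥0∞) ^ p ∂π ≤ ENNReal.ofReal (R ^ p))
    (hmom2 : ∫⁻ z, (‖z.2‖₊ : ℝ≥0∞) ^ p ∂π ≤ ENNReal.ofReal (R ^ p)) :
    ∫⁻ z, ENNReal.ofReal (L * (1 + ‖z.1‖ + ‖z.2‖) ^ ς * ‖z.1 - z.2‖) ∂π
      ≤ Kc p L R * (∫⁻ z, (‖z.1 - z.2‖₊ : ℝ≥0∞) ^ p ∂π) ^ (1/p) := by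
  have hp1 : 1 ≤ p := by linarith
  have hrw : ∫⁻ z, ENNReal.ofReal (L * (1 + ‖z.1‖ + ‖z.2‖) ^ ς * ‖z.1 - z.2‖) ∂π
      = ENNReal.ofReal L * ∫⁻ z, (Efn z) ^ ς * (‖z.1 - z.2‖₊ : ℝ≥0∞) ∂π := by
    rw [← lintegral_const_mul' _ _ ENNReal.ofReal_ne_top]
    apply lintegral_congr
    intro z
    rw [ofReal_lip_eq L ς hL.le hς z, mul_assoc]
  rw [hrw]
  have hmeasv : Measurable (fun z : Rd d × Rd d => (‖z.1 - z.2‖₊ : ℝ≥0∞)) :=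
    (measurable_fst.sub measurable_snd).nnnorm.coe_nnreal_ennreal
  rcases eq_or_lt_of_le hp1 with hpeq | hplt
  · -- p = 1, hence ς = 0
    have hς0 : ς = 0 := by linarith
    subst hς0
    have hint : ∫⁻ z, (Efn z) ^ (0:ℝ) * (‖z.1 - z.2‖₊ : ℝ≥0∞) ∂π
        = ∫⁻ z, (‖z.1 - z.2‖₊ : ℝ≥0∞) ∂π := by
      apply lintegral_congr; intro z; rw [ENNReal.rpow_zero, one_mul]
    rw [hint]
    have hN : (∫⁻ z, (‖z.1 - z.2‖₊ : ℝ≥0∞) ∂π)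
        = (∫⁻ z, (‖z.1 - z.2‖₊ : ℝ≥0∞) ^ p ∂π) ^ (1/p) := by
      rw [← hpeq]
      simp [ENNReal.rpow_one]
    rw [hN]
    gcongr
    exact ofReal_L_le_Kc hL.le
  · -- 1 < p
    set q := p / (p - 1) with hqdef
    have hpq : q.HolderConjugate p := (Real.HolderConjugate.conjExponent hplt).symm
    have hu : AEMeasurable (fun z : Rd d × Rd d => (Efn z) ^ ς) π :=
      (measurable_Efn.pow_const ς).aemeasurable
    have hhold := ENNReal.lintegral_mul_le_Lp_mul_Lq π hpq hu hmeasv.aemeasurable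
    simp only [Pi.mul_apply] at hhold
    unfold Kc
    rw [mul_assoc]
    gcongr ENNReal.ofReal L * ?_
    refine le_trans hhold ?_
    gcongr ?_ * _
    -- remains: (∫⁻ (Efn z ^ ς) ^ q)^(1/q) ≤ 2^p * 2^p * (...) + 1
    have hq1 : 1 ≤ q := hpq.lt.le
    have hq0 : 0 < q := lt_of_lt_of_le one_pos hq1
    have hςq : ς * q ≤ p := by
      rw [hqdef, ← mul_div_assoc, div_le_iff₀ (by linarith : (0:ℝ) < p - 1)]
      nlinarith
    have hpt : ∀ z : Rd d × Rd d, ((Efn z) ^ ς) ^ q ≤ (Efn z) ^ p := by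
      intro z
      rw [← ENNReal.rpow_mul]
      exact ENNReal.rpow_le_rpow_of_exponent_le (one_le_Efn z) hςq
    calc (∫⁻ z, ((Efn z) ^ ς) ^ q ∂π) ^ (1/q)
        ≤ (∫⁻ z, (Efn z) ^ p ∂π) ^ (1/q) := by
          gcongr with z
          exact hpt z
      _ ≤ (2 ^ p * 2 ^ p * (1 + ENNReal.ofReal (R ^ p) + ENNReal.ofReal (R ^ p))) ^ (1/q) := by
          gcongr
          exact lint_Efn_le π hp1 hmom1 hmom2
      _ ≤ 2 ^ p * 2 ^ p * (1 + ENNReal.ofReal (R ^ p) + ENNReal.ofReal (R ^ p)) + 1 :=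
          rpow_le_add_one _ (by positivity) (by
            rw [div_le_one hq0]; exact hq1)



lemma measurable_nnorm_rpow (p : ℝ) :
    Measurable (fun x : Rd d => (‖x‖₊ : ℝ≥0∞) ^ p) :=
  (measurable_nnnorm.coe_nnreal_ennreal).pow_const p

/-- a coupling of probability measures is a probability measure -/
lemma coupling_prob (π : Measure (Rd d × Rd d)) (μ : Measure (Rd d))
    [IsProbabilityMeasure μ] (h1 : π.map Prod.fst = μ) : IsProbabilityMeasure π := by
  constructor
  have : π.map Prod.fst Set.univ = 1 := by rw [h1]; exact measure_univ
  rwa [Measure.map_apply measurable_fst MeasurableSet.univ, Set.preimage_univ] at this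

/-- moment transfer along the first marginal -/
lemma mom_fst (π : Measure (Rd d × Rd d)) (μ : Measure (Rd d)) {p R : ℝ}
    (h1 : π.map Prod.fst = μ)
    (hm : ∫⁻ x, (‖x‖₊ : ℝ≥0∞) ^ p ∂μ ≤ ENNReal.ofReal (R ^ p)) :
    ∫⁻ z, (‖z.1‖₊ : ℝ≥0∞) ^ p ∂π ≤ ENNReal.ofReal (R ^ p) := by
  rwa [← h1, lintegral_map (measurable_nnorm_rpow p) measurable_fst] at hm

lemma mom_snd (π : Measure (Rd d × Rd d)) (ν : Measure (Rd d)) {p R : ℝ}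
    (h2 : π.map Prod.snd = ν)
    (hm : ∫⁻ x, (‖x‖₊ : ℝ≥0∞) ^ p ∂ν ≤ ENNReal.ofReal (R ^ p)) :
    ∫⁻ z, (‖z.2‖₊ : ℝ≥0∞) ^ p ∂π ≤ ENNReal.ofReal (R ^ p) := by
  rwa [← h2, lintegral_map (measurable_nnorm_rpow p) measurable_snd] at hm

/-- The key estimate: difference of integrals against two coupled measures. -/
lemma diff_integral_bound {W : Type*} [NormedAddCommGroup W] [NormedSpace ℝ W]
    (φ : Rd d → W) {L ς p R : ℝ} (hL : 0 < L) (hς : 0 ≤ ς) (hp : ς + 1 ≤ p) (hR : 0 < R)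
    (hφ : ∀ x y, ‖φ x - φ y‖ ≤ L * (1 + ‖x‖ + ‖y‖) ^ ς * ‖x - y‖)
    (μ ν : Measure (Rd d)) [IsProbabilityMeasure μ] [IsProbabilityMeasure ν]
    (hmμ : ∫⁻ x, (‖x‖₊ : ℝ≥0∞) ^ p ∂μ ≤ ENNReal.ofReal (R ^ p))
    (hmν : ∫⁻ x, (‖x‖₊ : ℝ≥0∞) ^ p ∂ν ≤ ENNReal.ofReal (R ^ p))
    (π : Measure (Rd d × Rd d)) (h1 : π.map Prod.fst = μ) (h2 : π.map Prod.snd = ν)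
    (hN : (∫⁻ z, (‖z.1 - z.2‖₊ : ℝ≥0∞) ^ p ∂π) ≠ ⊤) :
    ‖∫ x, φ x ∂μ - ∫ x, φ x ∂ν‖
      ≤ (Kc p L R).toReal * ((∫⁻ z, (‖z.1 - z.2‖₊ : ℝ≥0∞) ^ p ∂π) ^ (1/p)).toReal := by
  have hp1 : 1 ≤ p := by linarith
  have hπ : IsProbabilityMeasure π := coupling_prob π μ h1
  have hcont : Continuous φ := cont_of_lip φ L ς hφ
  have hmom1 := mom_fst π μ h1 hmμ
  have hmom2 := mom_snd π ν h2 hmν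
  have hgrow := growth_of_lip φ L ς p hL.le hς hp hφ
  have hint1 := (integrable_growth φ
    ((hcont.comp continuous_fst).aestronglyMeasurable (μ := π)) (norm_nonneg (φ 0)) hL.le
    hp1 hgrow hmom1).1
  have hint2 := (integrable_growth φ
    ((hcont.comp continuous_snd).aestronglyMeasurable (μ := π)) (norm_nonneg (φ 0)) hL.le
    hp1 hgrow hmom2).1
  have htr1 : ∫ x, φ x ∂μ = ∫ z, φ z.1 ∂π := by
    rw [← h1, integral_map measurable_fst.aemeasurable hcont.aestronglyMeasurable]
  have htr2 : ∫ x, φ x ∂ν = ∫ z, φ z.2 ∂π := by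
    rw [← h2, integral_map measurable_snd.aemeasurable hcont.aestronglyMeasurable]
  rw [htr1, htr2, ← integral_sub hint1 hint2]
  have hb1 : ‖∫ z, (φ z.1 - φ z.2) ∂π‖
      ≤ (∫⁻ z, ENNReal.ofReal ‖φ z.1 - φ z.2‖ ∂π).toReal :=
    norm_integral_le_lintegral_norm _
  refine le_trans hb1 ?_
  have hb2 : ∫⁻ z, ENNReal.ofReal ‖φ z.1 - φ z.2‖ ∂π
      ≤ Kc p L R * (∫⁻ z, (‖z.1 - z.2‖₊ : ℝ≥0∞) ^ p ∂π) ^ (1/p) := by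
    refine le_trans (lintegral_mono fun z => ENNReal.ofReal_le_ofReal (hφ z.1 z.2)) ?_
    exact lint_lip_bound π hς hp hL hR hmom1 hmom2
  have hfin : Kc p L R * (∫⁻ z, (‖z.1 - z.2‖₊ : ℝ≥0∞) ^ p ∂π) ^ (1/p) ≠ ⊤ :=
    ENNReal.mul_ne_top (Kc_ne_top hp1) (ENNReal.rpow_ne_top_of_nonneg (by positivity) hN)
  calc (∫⁻ z, ENNReal.ofReal ‖φ z.1 - φ z.2‖ ∂π).toReal
      ≤ (Kc p L R * (∫⁻ z, (‖z.1 - z.2‖₊ : ℝ≥0∞) ^ p ∂π) ^ (1/p)).toReal :=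
        ENNReal.toReal_mono hfin hb2
    _ = (Kc p L R).toReal * ((∫⁻ z, (‖z.1 - z.2‖₊ : ℝ≥0∞) ^ p ∂π) ^ (1/p)).toReal :=
        ENNReal.toReal_mul



/-- uniform lower bound on `∫ h dμ` over measures with bounded `p`-th moment -/
lemma int_h_lower (h : Rd d → ℝ) (hpos : ∀ x, 0 < h x) (hcont : Continuous h)
    {p R : ℝ} (hp : 1 ≤ p) (hR : 0 < R) :
    ∃ m > 0, ∀ (μ : Measure (Rd d)), IsProbabilityMeasure μ →
      (∫⁻ x, (‖x‖₊ : ℝ≥0∞) ^ p ∂μ ≤ ENNReal.ofReal (R ^ p)) → Integrable h μ →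
      m ≤ ∫ x, h x ∂μ := by
  have hp0 : (0:ℝ) < p := by linarith
  set r : ℝ := (2:ℝ) ^ (1/p) * R with hrdef
  have hr : 0 < r := mul_pos (Real.rpow_pos_of_pos two_pos _) hR
  obtain ⟨x₀, hx₀mem, hx₀min⟩ := (isCompact_closedBall (0:Rd d) r).exists_isMinOn
    ⟨0, Metric.mem_closedBall_self hr.le⟩ hcont.continuousOn
  refine ⟨h x₀ / 2, by have := hpos x₀; positivity, ?_⟩
  intro μ hprob hmom hinth
  haveI := hprob
  set X := ENNReal.ofReal (R ^ p) with hXdef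
  have hX0 : X ≠ 0 := (ENNReal.ofReal_pos.2 (Real.rpow_pos_of_pos hR p)).ne'
  have hXt : X ≠ ⊤ := ENNReal.ofReal_ne_top
  have hrp : ENNReal.ofReal (r ^ p) = 2 * X := by
    have h1 : r ^ p = 2 * R ^ p := by
      rw [hrdef, Real.mul_rpow (Real.rpow_pos_of_pos two_pos _).le hR.le,
        ← Real.rpow_mul (by norm_num : (0:ℝ) ≤ 2), one_div_mul_cancel hp0.ne',
        Real.rpow_one]
    rw [h1, ENNReal.ofReal_mul (by norm_num : (0:ℝ) ≤ 2)]
    norm_num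
    rw [hXdef]
  have hmark := mul_meas_ge_le_lintegral₀ ((measurable_nnorm_rpow (d := d) p).aemeasurable)
    (μ := μ) (ENNReal.ofReal (r ^ p))
  have hset : {x : Rd d | ENNReal.ofReal (r ^ p) ≤ (‖x‖₊ : ℝ≥0∞) ^ p}
      = {x : Rd d | r ≤ ‖x‖} := by
    ext x
    simp only [Set.mem_setOf_eq]
    rw [← ENNReal.ofReal_rpow_of_nonneg hr.le hp0.le, ← enorm_eq_nnnorm, ← ofReal_norm,
      ENNReal.rpow_le_rpow_iff hp0]
    exact ENNReal.ofReal_le_ofReal_iff (norm_nonneg x)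
  rw [hset, hrp] at hmark
  have hmeasset : MeasurableSet {x : Rd d | r ≤ ‖x‖} :=
    measurableSet_le measurable_const measurable_norm
  have htail : μ {x : Rd d | r ≤ ‖x‖} ≤ 2⁻¹ := by
    have hm2 : 2 * X * μ {x : Rd d | r ≤ ‖x‖} ≤ X := le_trans hmark hmom
    by_contra hcon
    push_neg at hcon
    have h2X0 : 2 * X ≠ 0 := mul_ne_zero (by norm_num) hX0
    have h2Xt : 2 * X ≠ ⊤ := ENNReal.mul_ne_top (by norm_num) hXt
    have hlt : X < 2 * X * μ {x : Rd d | r ≤ ‖x‖} := by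
      calc X = 2 * X * 2⁻¹ := by
            rw [mul_comm 2 X, mul_assoc, ENNReal.mul_inv_cancel (by norm_num) (by norm_num),
              mul_one]
        _ < 2 * X * μ {x : Rd d | r ≤ ‖x‖} :=
            (ENNReal.mul_lt_mul_iff_right h2X0 h2Xt).2 hcon
    exact absurd (lt_of_lt_of_le hlt hm2) (lt_irrefl X)
  have hball : (2⁻¹ : ℝ≥0∞) ≤ μ (Metric.closedBall 0 r) := by
    have hcompl : {x : Rd d | r ≤ ‖x‖}ᶜ ⊆ Metric.closedBall 0 r := by
      intro x hx
      simp only [Set.mem_compl_iff, Set.mem_setOf_eq, not_le] at hx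
      rw [Metric.mem_closedBall, dist_zero_right]
      exact hx.le
    calc (2⁻¹ : ℝ≥0∞) = 1 - 2⁻¹ := by
          have := ENNReal.sub_half (one_ne_top); simpa using this.symm
      _ ≤ 1 - μ {x : Rd d | r ≤ ‖x‖} := tsub_le_tsub_left htail 1
      _ = μ {x : Rd d | r ≤ ‖x‖}ᶜ := (prob_compl_eq_one_sub hmeasset).symm
      _ ≤ μ (Metric.closedBall 0 r) := measure_mono hcompl
  have hhalf : (1:ℝ)/2 ≤ (μ (Metric.closedBall 0 r)).toReal := by
    have := ENNReal.toReal_mono (measure_ne_top μ _) hball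
    simpa using this
  have hind : ∫ x, (Metric.closedBall (0:Rd d) r).indicator (fun _ => h x₀) x ∂μ
      ≤ ∫ x, h x ∂μ := by
    apply integral_mono ((integrable_const (h x₀)).indicator measurableSet_closedBall) hinth
    intro x
    by_cases hx : x ∈ Metric.closedBall (0:Rd d) r
    · rw [Set.indicator_of_mem hx]
      exact (isMinOn_iff.1 hx₀min) x hx
    · rw [Set.indicator_of_notMem hx]
      exact (hpos x).le
  rw [integral_indicator measurableSet_closedBall, setIntegral_const,
    smul_eq_mul] at hind
  have hfin : h x₀ / 2 ≤ (μ (Metric.closedBall 0 r)).toReal * h x₀ := by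
    have hx₀pos := hpos x₀
    nlinarith
  rw [measureReal_def] at hind
  linarith


lemma norm_integral_growth {W : Type*} [NormedAddCommGroup W] [NormedSpace ℝ W]
    (φ : Rd d → W) (μ : Measure (Rd d)) [IsProbabilityMeasure μ]
    (hmeas : AEStronglyMeasurable φ μ) {A B p R : ℝ} (hA : 0 ≤ A) (hB : 0 ≤ B) (hp : 1 ≤ p)
    (hgrow : ∀ x, ‖φ x‖ ≤ A + B * (1 + ‖x‖) ^ p)
    (hmom : ∫⁻ x, (‖x‖₊ : ℝ≥0∞) ^ p ∂μ ≤ ENNReal.ofReal (R ^ p)) :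
    ‖∫ x, φ x ∂μ‖
      ≤ (ENNReal.ofReal A + ENNReal.ofReal B * (2 ^ p * (1 + ENNReal.ofReal (R ^ p)))).toReal := by
  have hb := (integrable_growth φ (ξ := id) hmeas hA hB hp hgrow hmom).2
  refine le_trans (norm_integral_le_lintegral_norm φ) (ENNReal.toReal_mono ?_ hb)
  have h2 : (2:ℝ≥0∞) ^ p ≠ ⊤ := ENNReal.rpow_ne_top_of_nonneg (by linarith) (by norm_num)
  exact ENNReal.add_ne_top.2 ⟨ENNReal.ofReal_ne_top,
    ENNReal.mul_ne_top ENNReal.ofReal_ne_top (ENNReal.mul_ne_top h2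
      (ENNReal.add_ne_top.2 ⟨one_ne_top, ENNReal.ofReal_ne_top⟩))⟩

lemma N_ne_top (π : Measure (Rd d × Rd d)) {p R : ℝ} (hp : 1 ≤ p)
    (hmom1 : ∫⁻ z, (‖z.1‖₊ : ℝ≥0∞) ^ p ∂π ≤ ENNReal.ofReal (R ^ p))
    (hmom2 : ∫⁻ z, (‖z.2‖₊ : ℝ≥0∞) ^ p ∂π ≤ ENNReal.ofReal (R ^ p)) :
    (∫⁻ z, (‖z.1 - z.2‖₊ : ℝ≥0∞) ^ p ∂π) ≠ ⊤ := by
  have h2 : (2:ℝ≥0∞) ^ (p-1) ≠ ⊤ := ENNReal.rpow_ne_top_of_nonneg (by linarith) (by norm_num)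
  have hpt : ∀ z : Rd d × Rd d, (‖z.1 - z.2‖₊ : ℝ≥0∞) ^ p
      ≤ 2 ^ (p-1) * ((‖z.1‖₊ : ℝ≥0∞) ^ p + (‖z.2‖₊ : ℝ≥0∞) ^ p) := by
    intro z
    calc (‖z.1 - z.2‖₊ : ℝ≥0∞) ^ p ≤ ((‖z.1‖₊ : ℝ≥0∞) + (‖z.2‖₊ : ℝ≥0∞)) ^ p := by
          gcongr
          exact_mod_cast nnnorm_sub_le z.1 z.2
      _ ≤ 2 ^ (p-1) * ((‖z.1‖₊ : ℝ≥0∞) ^ p + (‖z.2‖₊ : ℝ≥0∞) ^ p) :=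
          ENNReal.rpow_add_le_mul_rpow_add_rpow _ _ hp
  apply ne_top_of_le_ne_top ?_ (lintegral_mono hpt)
  rw [lintegral_const_mul' _ _ h2,
    lintegral_add_left ((measurable_fst.nnnorm.coe_nnreal_ennreal).pow_const p)]
  exact ENNReal.mul_ne_top h2 (ENNReal.add_ne_top.2
    ⟨ne_top_of_le_ne_top ENNReal.ofReal_ne_top hmom1,
     ne_top_of_le_ne_top ENNReal.ofReal_ne_top hmom2⟩)

end RatioAux

/-- **Stability estimate for ratios of integrals.**
Let `V` be a finite-dimensional real normed vector space and `g : ℝ^d → V`,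
`h : ℝ^d → (0, ∞)` satisfy `max ‖g x - g y‖ |h x - h y| ≤ L (1 + |x| + |y|)^ς |x - y|`.
Then for all `p ≥ ς + 1` and `R > 0` there is `C > 0` such that for all
`μ, ν ∈ P_{p,R}(ℝ^d)`,
`‖(∫ g dμ)/(∫ h dμ) - (∫ g dν)/(∫ h dν)‖ ≤ C W_p(μ, ν)`. -/

theorem ratio_integral_stability
    {V : Type} [NormedAddCommGroup V] [NormedSpace ℝ V] [FiniteDimensional ℝ V]
    (d : ℕ) (g : Rd d → V) (h : Rd d → ℝ) (hpos : ∀ x, 0 < h x)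
    (ς L : ℝ) (hς : 0 ≤ ς) (hL : 0 < L)
    (hlip : ∀ x y : Rd d, max ‖g x - g y‖ |h x - h y| ≤ L * (1 + ‖x‖ + ‖y‖) ^ ς * ‖x - y‖)
    (p : ℝ) (hp : ς + 1 ≤ p) (R : ℝ) (hR : 0 < R) :
    ∃ C > 0, ∀ μ ν : Measure (Rd d),
      IsProbabilityMeasure μ → IsProbabilityMeasure ν →
      MomLE p R μ → MomLE p R ν →
      ‖(∫ x, h x ∂μ)⁻¹ • (∫ x, g x ∂μ) - (∫ x, h x ∂ν)⁻¹ • (∫ x, g x ∂ν)‖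
        ≤ C * Wp p μ ν := by
  classical
  have hp1 : (1:ℝ) ≤ p := by linarith
  have hglip : ∀ x y : Rd d, ‖g x - g y‖ ≤ L * (1 + ‖x‖ + ‖y‖) ^ ς * ‖x - y‖ :=
    fun x y => le_trans (le_max_left _ _) (hlip x y)
  have hhlip : ∀ x y : Rd d, ‖h x - h y‖ ≤ L * (1 + ‖x‖ + ‖y‖) ^ ς * ‖x - y‖ := by
    intro x y
    rw [Real.norm_eq_abs]
    exact le_trans (le_max_right _ _) (hlip x y)
  have hcontg := RatioAux.cont_of_lip g L ς hglip
  have hconth := RatioAux.cont_of_lip h L ς hhlip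
  have hgrowg := RatioAux.growth_of_lip g L ς p hL.le hς hp hglip
  have hgrowh := RatioAux.growth_of_lip h L ς p hL.le hς hp hhlip
  obtain ⟨m, hm, hlow⟩ := RatioAux.int_h_lower h hpos hconth hp1 hR
  set G : ℝ := (ENNReal.ofReal ‖g 0‖
      + ENNReal.ofReal L * (2 ^ p * (1 + ENNReal.ofReal (R ^ p)))).toReal with hGdef
  have hG0 : 0 ≤ G := ENNReal.toReal_nonneg
  set KT : ℝ := (RatioAux.Kc p L R).toReal with hKTdef
  have hKT : 0 < KT :=
    ENNReal.toReal_pos (RatioAux.Kc_pos hL).ne' (RatioAux.Kc_ne_top hp1)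
  set C : ℝ := (m⁻¹ + G / m ^ 2) * KT with hCdef
  have hmi : 0 < m⁻¹ := inv_pos.2 hm
  have hC : 0 < C := by
    apply mul_pos ?_ hKT
    have : 0 ≤ G / m ^ 2 := by positivity
    linarith
  refine ⟨C, hC, ?_⟩
  intro μ ν hμ hν hmμ hmν
  haveI := hμ; haveI := hν
  have hmμ' : ∫⁻ x, (‖x‖₊ : ℝ≥0∞) ^ p ∂μ ≤ ENNReal.ofReal (R ^ p) := hmμ
  have hmν' : ∫⁻ x, (‖x‖₊ : ℝ≥0∞) ^ p ∂ν ≤ ENNReal.ofReal (R ^ p) := hmν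
  have hinthμ : Integrable h μ := (RatioAux.integrable_growth h (ξ := id)
    hconth.aestronglyMeasurable (norm_nonneg (h 0)) hL.le hp1 hgrowh hmμ').1
  have hinthν : Integrable h ν := (RatioAux.integrable_growth h (ξ := id)
    hconth.aestronglyMeasurable (norm_nonneg (h 0)) hL.le hp1 hgrowh hmν').1
  have hbν : ‖∫ x, g x ∂ν‖ ≤ G := RatioAux.norm_integral_growth g ν
    hcontg.aestronglyMeasurable (norm_nonneg (g 0)) hL.le hp1 hgrowg hmν'
  have hhμ : m ≤ ∫ x, h x ∂μ := hlow μ hμ hmμ' hinthμ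
  have hhν : m ≤ ∫ x, h x ∂ν := hlow ν hν hmν' hinthν
  set LHSv : ℝ :=
    ‖(∫ x, h x ∂μ)⁻¹ • (∫ x, g x ∂μ) - (∫ x, h x ∂ν)⁻¹ • (∫ x, g x ∂ν)‖ with hLdef
  set S : Set ℝ≥0∞ := {c : ℝ≥0∞ | ∃ π : Measure (Rd d × Rd d),
      π.map Prod.fst = μ ∧ π.map Prod.snd = ν ∧
      c = (∫⁻ z, (‖z.1 - z.2‖₊ : ℝ≥0∞) ^ p ∂π) ^ (1 / p)} with hSdef
  have key : ∀ c ∈ S, ENNReal.ofReal (LHSv / C) ≤ c := by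
    rintro c ⟨π, hπ1, hπ2, hceq⟩
    rcases eq_or_ne c ⊤ with hc | hc
    · rw [hc]; exact le_top
    · haveI : IsProbabilityMeasure π := RatioAux.coupling_prob π μ hπ1
      have hNne : (∫⁻ z, (‖z.1 - z.2‖₊ : ℝ≥0∞) ^ p ∂π) ≠ ⊤ := by
        intro hNtop
        apply hc
        rw [hceq, hNtop, ENNReal.top_rpow_of_pos (by positivity)]
      have hΔg := RatioAux.diff_integral_bound g hL hς hp hR hglip μ ν hmμ' hmν'
        π hπ1 hπ2 hNne
      have hΔh := RatioAux.diff_integral_bound h hL hς hp hR hhlip μ ν hmμ' hmν'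
        π hπ1 hπ2 hNne
      rw [← hceq] at hΔg hΔh
      have hΔh' : |(∫ x, h x ∂μ) - ∫ x, h x ∂ν| ≤ KT * c.toReal := by
        rw [← Real.norm_eq_abs]; exact hΔh
      have hratio := RatioAux.ratio_bound (∫ x, g x ∂μ) (∫ x, g x ∂ν)
        (∫ x, h x ∂μ) (∫ x, h x ∂ν) m G hm hhμ hhν hbν
      have hfinal : LHSv ≤ C * c.toReal := by
        calc LHSv ≤ m⁻¹ * ‖(∫ x, g x ∂μ) - ∫ x, g x ∂ν‖
              + (G / m ^ 2) * |(∫ x, h x ∂μ) - ∫ x, h x ∂ν| := hratio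
          _ ≤ m⁻¹ * (KT * c.toReal) + (G / m ^ 2) * (KT * c.toReal) := by
              apply add_le_add
              · exact mul_le_mul_of_nonneg_left hΔg hmi.le
              · exact mul_le_mul_of_nonneg_left hΔh' (by positivity)
          _ = C * c.toReal := by rw [hCdef]; ring
      have hdivle : LHSv / C ≤ c.toReal := by
        rw [div_le_iff₀ hC]
        linarith [hfinal]
      calc ENNReal.ofReal (LHSv / C) ≤ ENNReal.ofReal c.toReal :=
            ENNReal.ofReal_le_ofReal hdivle
        _ = c := ENNReal.ofReal_toReal hc
  have hmomprod1 := RatioAux.mom_fst (μ.prod ν) μ Measure.fst_prod hmμ'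
  have hmomprod2 := RatioAux.mom_snd (μ.prod ν) ν Measure.snd_prod hmν'
  have hN₀ := RatioAux.N_ne_top (μ.prod ν) hp1 hmomprod1 hmomprod2
  have hEl : ((∫⁻ z, (‖z.1 - z.2‖₊ : ℝ≥0∞) ^ p ∂(μ.prod ν)) ^ (1 / p)) ∈ S :=
    ⟨μ.prod ν, Measure.fst_prod, Measure.snd_prod, rfl⟩
  have hItop : sInf S ≠ ⊤ :=
    ne_top_of_le_ne_top (ENNReal.rpow_ne_top_of_nonneg (by positivity) hN₀) (sInf_le hEl)
  have hle : ENNReal.ofReal (LHSv / C) ≤ sInf S := le_sInf key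
  have hfin : LHSv / C ≤ (sInf S).toReal := by
    have := ENNReal.toReal_mono hItop hle
    rwa [ENNReal.toReal_ofReal (div_nonneg (norm_nonneg _) hC.le)] at this
  have : LHSv ≤ C * (sInf S).toReal := by
    rw [div_le_iff₀ hC] at hfin
    linarith [hfin]
  exact this

end
end

section
/- For all p, q, β > 0 and every Borel probability measure ν on [0, ∞) with ∫ y^q ν(dy) < ∞, it holds that (∫ y^p e^{−β y} ν(dy)) / (∫ e^{−β y} ν(dy)) ≤ C(p, q, β) · (1 + ∫ y^q ν(dy))^{p/q}, where C(p, q, β) := (1 − 2^{−q})^{−1} (p/β)^p e^{2β − p}. -/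
open MeasureTheory ENNReal
open scoped NNReal

/-- The supremum of `z^p e^{-βz}` over `z ≥ 0` is `(p/β)^p e^{-p}`. -/
private lemma sup_rpow_exp {p β : ℝ} (hp : 0 < p) (hβ : 0 < β) {z : ℝ} (hz : 0 ≤ z) :
    z ^ p * Real.exp (-β * z) ≤ (p / β) ^ p * Real.exp (-p) := by
  rcases eq_or_lt_of_le hz with h0 | h0
  · rw [← h0, Real.zero_rpow hp.ne', zero_mul]
    positivity
  · have hc : (0:ℝ) < p / β := div_pos hp hβ
    have hL : 0 < z ^ p * Real.exp (-β * z) := by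
      have := Real.rpow_pos_of_pos h0 p
      positivity
    rw [← Real.log_le_log_iff hL (by positivity)]
    rw [Real.log_mul (ne_of_gt (Real.rpow_pos_of_pos h0 p)) (Real.exp_ne_zero _),
      Real.log_mul (ne_of_gt (Real.rpow_pos_of_pos hc p)) (Real.exp_ne_zero _),
      Real.log_rpow h0, Real.log_rpow hc, Real.log_exp, Real.log_exp]
    have hu : Real.log (z / (p / β)) ≤ z / (p / β) - 1 :=
      Real.log_le_sub_one_of_pos (by positivity)
    rw [Real.log_div h0.ne' hc.ne'] at hu
    have h2 := mul_le_mul_of_nonneg_left hu hp.le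
    have hz' : p * (z / (p / β)) = β * z := by field_simp
    rw [mul_sub, mul_sub, hz', mul_one] at h2
    linarith

set_option maxHeartbeats 1600000 in
/-- **Bound on exponentially reweighted moments on the half-line, with explicit constant.**
For every probability measure `ν` concentrated on `[0, ∞)` with finite `q`-th moment,
`(∫ y^p e^{-βy} dν) / (∫ e^{-βy} dν) ≤ C(p,q,β) (1 + ∫ y^q dν)^{p/q}` with
`C(p,q,β) = (1 - 2^{-q})⁻¹ (p/β)^p e^{2β - p}`. -/
theorem reweighted_moment_halfline_bound
    (p q β : ℝ) (hp : 0 < p) (hq : 0 < q) (hβ : 0 < β)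
    (ν : Measure ℝ) (hprob : IsProbabilityMeasure ν)
    (hsupp : ∀ᵐ y ∂ν, 0 ≤ y)
    (hmom : ∫⁻ y, ENNReal.ofReal (y ^ q) ∂ν < ⊤) :
    (∫ y, y ^ p * Real.exp (-β * y) ∂ν) / (∫ y, Real.exp (-β * y) ∂ν)
      ≤ ((1 - (2 : ℝ) ^ (-q))⁻¹ * (p / β) ^ p * Real.exp (2 * β - p)) *
        (1 + ∫ y, y ^ q ∂ν) ^ (p / q) := by
  haveI := hprob
  have hq' : q ≠ 0 := hq.ne'
  set M := ∫ y, y ^ q ∂ν with hMdef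
  have hmes_q : Measurable fun y : ℝ => y ^ q :=
    (Real.continuous_rpow_const hq.le).measurable
  have hq_nonneg : ∀ᵐ y ∂ν, 0 ≤ y ^ q := hsupp.mono fun y hy => Real.rpow_nonneg hy q
  have hM0 : 0 ≤ M := integral_nonneg_of_ae hq_nonneg
  have hlin : ENNReal.ofReal M = ∫⁻ y, ENNReal.ofReal (y ^ q) ∂ν := by
    rw [hMdef, integral_eq_lintegral_of_nonneg_ae hq_nonneg hmes_q.aestronglyMeasurable,
      ENNReal.ofReal_toReal hmom.ne]
  set R := (1 + M) ^ (1 / q) with hRdef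
  have h1M : (1:ℝ) ≤ 1 + M := by linarith
  have h0M : (0:ℝ) ≤ 1 + M := by linarith
  have hR1 : (1:ℝ) ≤ R := Real.one_le_rpow h1M (by positivity)
  have hR0 : (0:ℝ) < R := lt_of_lt_of_le one_pos hR1
  have hRq : R ^ q = 1 + M := by
    rw [hRdef, ← Real.rpow_mul h0M, one_div_mul_cancel hq', Real.rpow_one]
  have hRp : R ^ p = (1 + M) ^ (p / q) := by
    rw [hRdef, ← Real.rpow_mul h0M, one_div_mul_eq_div]
  -- Markov inequality: ν {y | 2R ≤ y} ≤ 2^{-q}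
  set S : Set ℝ := {y : ℝ | 2 * R ≤ y} with hSdef
  have hSm : MeasurableSet S := measurableSet_le measurable_const measurable_id
  have h2R : (0:ℝ) < 2 * R := by linarith
  have h2Rq : (2 * R) ^ q = 2 ^ q * (1 + M) := by
    rw [Real.mul_rpow (by norm_num) hR0.le, hRq]
  have h2Rqpos : (0:ℝ) < (2 * R) ^ q := Real.rpow_pos_of_pos h2R q
  have hνS : (ν S).toReal ≤ 2 ^ (-q) := by
    have hsub : S ⊆ {y : ℝ | ENNReal.ofReal ((2*R) ^ q) ≤ ENNReal.ofReal (y ^ q)} := by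
      intro y hy
      exact ENNReal.ofReal_le_ofReal (Real.rpow_le_rpow h2R.le hy hq.le)
    have hmark := meas_ge_le_lintegral_div (μ := ν)
      (hmes_q.ennreal_ofReal.aemeasurable)
      (ε := ENNReal.ofReal ((2*R)^q))
      ((ENNReal.ofReal_pos.mpr h2Rqpos).ne') ENNReal.ofReal_ne_top
    have hle : ν S ≤ ENNReal.ofReal (M / (2*R)^q) := by
      refine le_trans (measure_mono hsub) (le_trans hmark ?_)
      rw [← hlin, ENNReal.ofReal_div_of_pos h2Rqpos]
    have htr : (ν S).toReal ≤ M / (2*R)^q := by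
      have := ENNReal.toReal_mono ENNReal.ofReal_ne_top hle
      rwa [ENNReal.toReal_ofReal (by positivity)] at this
    refine le_trans htr ?_
    rw [h2Rq]
    have hmul : (2:ℝ) ^ (-q) * (2 ^ q * (1 + M)) = 1 + M := by
      rw [← mul_assoc, ← Real.rpow_add two_pos]
      simp
    rw [div_le_iff₀ (by positivity), hmul]
    linarith
  -- integrability helper
  have hbdd : ∀ {f : ℝ → ℝ} (c : ℝ), Measurable f → (∀ᵐ y ∂ν, ‖f y‖ ≤ c) → Integrable f ν :=
    fun {f} c hf h => ⟨hf.aestronglyMeasurable, HasFiniteIntegral.of_bounded h⟩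
  have hint_exp : Integrable (fun y => Real.exp (-β * y)) ν := by
    refine hbdd 1 ((measurable_id.const_mul (-β)).exp) ?_
    filter_upwards [hsupp] with y hy
    rw [Real.norm_eq_abs, abs_of_pos (Real.exp_pos _)]
    rw [Real.exp_le_one_iff]
    nlinarith
  set D := ∫ y, Real.exp (-β * y) ∂ν with hDdef
  -- lower bound on D
  set t : ℝ := 2 ^ (-q) with htdef
  have ht0 : 0 < t := Real.rpow_pos_of_pos two_pos _
  have ht1 : t < 1 := Real.rpow_lt_one_of_one_lt_of_neg one_lt_two (neg_lt_zero.mpr hq)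
  have hcompl : (ν Sᶜ).toReal = 1 - (ν S).toReal := by
    rw [prob_compl_eq_one_sub hSm, ENNReal.toReal_sub_of_le prob_le_one one_ne_top]
    simp
  have hDlow : Real.exp (-(2 * β * R)) * (1 - t) ≤ D := by
    have hptw : ∀ᵐ y ∂ν,
        Sᶜ.indicator (fun _ => Real.exp (-(2*β*R))) y ≤ Real.exp (-β * y) := by
      filter_upwards [hsupp] with y hy
      by_cases hyS : y ∈ Sᶜ
      · rw [Set.indicator_of_mem hyS]
        apply Real.exp_le_exp.mpr
        simp only [Set.mem_compl_iff, hSdef, Set.mem_setOf_eq, not_le] at hyS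
        nlinarith
      · rw [Set.indicator_of_notMem hyS]
        positivity
    have hind : Integrable (Sᶜ.indicator fun _ => Real.exp (-(2*β*R))) ν :=
      (integrable_const _).indicator hSm.compl
    have hmono := integral_mono_ae hind hint_exp hptw
    rw [integral_indicator_const _ hSm.compl, smul_eq_mul, measureReal_def, hcompl] at hmono
    nlinarith [Real.exp_pos (-(2*β*R))]
  have hD0 : 0 < D :=
    lt_of_lt_of_le (mul_pos (Real.exp_pos _) (by linarith)) hDlow
  -- pointwise bound on the numerator integrand
  set K := (p / β) ^ p * Real.exp (-p) with hKdef
  have hK0 : 0 < K := by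
    have := Real.rpow_pos_of_pos (div_pos hp hβ) p
    positivity
  set γ := β * (1 - 1 / R) with hγdef
  have h1R : 1 / R ≤ 1 := by
    rw [div_le_one hR0]; exact hR1
  have hγ0 : 0 ≤ γ := mul_nonneg hβ.le (by linarith)
  have hstep1 : ∀ᵐ y ∂ν,
      y ^ p * Real.exp (-β * y) ≤ R ^ p * K * Real.exp (-γ * y) := by
    filter_upwards [hsupp] with y hy
    have h1 : y ^ p = R ^ p * (y / R) ^ p := by
      rw [← Real.mul_rpow hR0.le (by positivity), mul_div_cancel₀ _ hR0.ne']
    have h2 : Real.exp (-β * y) = Real.exp (-β * (y / R)) * Real.exp (-γ * y) := by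
      rw [← Real.exp_add]
      congr 1
      rw [hγdef]
      field_simp
      ring
    rw [h1, h2]
    have hs := sup_rpow_exp hp hβ (z := y / R) (by positivity)
    calc R ^ p * (y/R)^p * (Real.exp (-β*(y/R)) * Real.exp (-γ*y))
        = R ^ p * ((y/R)^p * Real.exp (-β*(y/R))) * Real.exp (-γ*y) := by ring
      _ ≤ R ^ p * K * Real.exp (-γ*y) := by
          apply mul_le_mul_of_nonneg_right _ (Real.exp_pos _).le
          rw [hKdef]
          apply mul_le_mul_of_nonneg_left hs
          exact (Real.rpow_pos_of_pos hR0 p).le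
  have hintN : Integrable (fun y => y ^ p * Real.exp (-β * y)) ν := by
    refine hbdd K (((Real.continuous_rpow_const hp.le).measurable).mul
      ((measurable_id.const_mul (-β)).exp)) ?_
    filter_upwards [hsupp] with y hy
    rw [Real.norm_eq_abs, abs_of_nonneg (mul_nonneg (Real.rpow_nonneg hy p) (Real.exp_pos _).le)]
    exact sup_rpow_exp hp hβ hy
  have hint_g : Integrable (fun y => Real.exp (-γ * y)) ν := by
    refine hbdd 1 ((measurable_id.const_mul (-γ)).exp) ?_
    filter_upwards [hsupp] with y hy
    rw [Real.norm_eq_abs, abs_of_pos (Real.exp_pos _), Real.exp_le_one_iff]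
    nlinarith
  set D' := ∫ y, Real.exp (-γ * y) ∂ν with hD'def
  have hD'0 : 0 ≤ D' := integral_nonneg fun y => (Real.exp_pos _).le
  have hN1 : ∫ y, y ^ p * Real.exp (-β * y) ∂ν ≤ R ^ p * K * D' := by
    have h := integral_mono_ae hintN (hint_g.const_mul (R ^ p * K)) hstep1
    rwa [integral_const_mul] at h
  -- bound D'
  have hstep2 : ∀ᵐ y ∂ν, Real.exp (-γ * y) ≤
      Real.exp (2*β) * Real.exp (-β*y) +
        S.indicator (fun _ => Real.exp (2*β - 2*β*R)) y := by
    filter_upwards [hsupp] with y hy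
    by_cases hyS : y ∈ S
    · have h2Ry : 2 * R ≤ y := hyS
      have hcalc : γ * (2*R) = 2*β*R - 2*β := by
        rw [hγdef]; field_simp
      have h1 : Real.exp (-γ * y) ≤ Real.exp (2*β - 2*β*R) := by
        apply Real.exp_le_exp.mpr
        linarith [mul_le_mul_of_nonneg_left h2Ry hγ0, hcalc]
      rw [Set.indicator_of_mem hyS]
      linarith [mul_pos (Real.exp_pos (2*β)) (Real.exp_pos (-β*y))]
    · rw [Set.indicator_of_notMem hyS, add_zero, ← Real.exp_add]
      apply Real.exp_le_exp.mpr
      simp only [hSdef, Set.mem_setOf_eq, not_le] at hyS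
      have hγy : γ * y = β*y - β*y/R := by
        rw [hγdef]; field_simp
      have hyR : β * y / R ≤ 2 * β := by
        rw [div_le_iff₀ hR0]; nlinarith
      linarith
  have hD'le : D' ≤ Real.exp (2*β) * D + Real.exp (2*β - 2*β*R) * (ν S).toReal := by
    have hrhs : Integrable (fun y => Real.exp (2*β) * Real.exp (-β*y) +
        S.indicator (fun _ => Real.exp (2*β - 2*β*R)) y) ν :=
      (hint_exp.const_mul _).add ((integrable_const _).indicator hSm)
    have h := integral_mono_ae hint_g hrhs hstep2
    rwa [integral_add (hint_exp.const_mul _) ((integrable_const _).indicator hSm),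
      integral_const_mul, integral_indicator_const _ hSm, smul_eq_mul, measureReal_def, mul_comm ((ν S).toReal)] at h
  -- combine: D' ≤ e^{2β} D / (1-t)
  have hexpR : Real.exp (2*β - 2*β*R) ≤ Real.exp (2*β) * (D / (1 - t)) := by
    have h1 : Real.exp (-(2*β*R)) ≤ D / (1 - t) := by
      rw [le_div_iff₀ (by linarith)]
      exact hDlow
    calc Real.exp (2*β - 2*β*R) = Real.exp (2*β) * Real.exp (-(2*β*R)) := by
          rw [← Real.exp_add]; ring_nf
      _ ≤ Real.exp (2*β) * (D / (1 - t)) :=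
          mul_le_mul_of_nonneg_left h1 (Real.exp_pos _).le
  have hD'fin : D' ≤ Real.exp (2*β) * D / (1 - t) := by
    have h2 : Real.exp (2*β - 2*β*R) * (ν S).toReal ≤
        Real.exp (2*β) * (D / (1 - t)) * t := by
      have h1t : (0:ℝ) < 1 - t := by linarith
      apply mul_le_mul hexpR hνS (ENNReal.toReal_nonneg)
      positivity
    have h3 : Real.exp (2*β) * D + Real.exp (2*β) * (D / (1 - t)) * t =
        Real.exp (2*β) * D / (1 - t) := by
      have h1t : (1:ℝ) - t ≠ 0 := by linarith
      field_simp
      ring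
    calc D' ≤ Real.exp (2*β) * D + Real.exp (2*β - 2*β*R) * (ν S).toReal := hD'le
      _ ≤ Real.exp (2*β) * D + Real.exp (2*β) * (D / (1 - t)) * t := by linarith
      _ = Real.exp (2*β) * D / (1 - t) := h3
  -- final assembly
  rw [div_le_iff₀ hD0]
  have hRpK : 0 ≤ R ^ p * K := mul_nonneg (Real.rpow_pos_of_pos hR0 p).le hK0.le
  have hfinal : R ^ p * K * D' ≤
      ((1 - t)⁻¹ * (p / β) ^ p * Real.exp (2 * β - p)) * (1 + M) ^ (p / q) * D := by
    have h := mul_le_mul_of_nonneg_left hD'fin hRpK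
    refine le_trans h (le_of_eq ?_)
    rw [← hRp, hKdef]
    have hexp : Real.exp (2 * β - p) = Real.exp (2*β) * Real.exp (-p) := by
      rw [← Real.exp_add]; ring_nf
    rw [hexp]
    field_simp
  exact le_trans hN1 hfinal
end

section
/- Fix β > 0 and d ≥ 1. Suppose f : ℝ^d → ℝ is bounded from below by f_* = inf f and there are real numbers u ≥ ℓ > 0 and positive constants c_u, C_u, c_ℓ, C_ℓ such that c_ℓ |x|^ℓ − C_ℓ ≤ f(x) − f_* ≤ c_u |x|^u + C_u for all x ∈ ℝ^d. Then for all p, q > 0 there exist constants C_1, C_2 > 0, depending only on p, q, β, u, ℓ, c_u, C_u, c_ℓ, C_ℓ, such that for every Borel probability measure μ on ℝ^d with ∫ |x|^q μ(dx) < ∞, (∫ |x|^p e^{−β f(x)} μ(dx)) / (∫ e^{−β f(x)} μ(dx)) ≤ (C_1 + C_2 ∫ |x|^q μ(dx))^{pu/(qℓ)}. -/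
open MeasureTheory ENNReal
open scoped NNReal

noncomputable section

lemma exists_rpow_le_exp (p ℓ α : ℝ) (hp : 0 < p) (hℓ : 0 < ℓ) (hα : 0 < α) :
    ∃ K : ℝ, 1 ≤ K ∧ ∀ t : ℝ, 0 ≤ t → t ^ p ≤ K * Real.exp (α * t ^ ℓ) := by
  set n := ⌈p / ℓ⌉₊ with hn
  refine ⟨max 1 ((Nat.factorial n : ℝ) / α ^ n), le_max_left _ _, fun t ht => ?_⟩
  have hexp1 : (1:ℝ) ≤ Real.exp (α * t ^ ℓ) :=
    Real.one_le_exp (by positivity)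
  rcases le_total t 1 with h1 | h1
  · calc t ^ p ≤ 1 := Real.rpow_le_one ht h1 hp.le
      _ ≤ max 1 ((Nat.factorial n : ℝ) / α ^ n) * Real.exp (α * t ^ ℓ) := by
          nlinarith [le_max_left (1:ℝ) ((Nat.factorial n : ℝ) / α ^ n)]
  · have hnp : p ≤ ℓ * n := by
      have h : p / ℓ ≤ (n : ℝ) := Nat.le_ceil (p / ℓ)
      calc p = (p / ℓ) * ℓ := by field_simp
        _ ≤ (n : ℝ) * ℓ := by nlinarith
        _ = ℓ * n := by ring
    have h2 : t ^ p ≤ (t ^ ℓ) ^ n := by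
      rw [← Real.rpow_natCast (t ^ ℓ) n, ← Real.rpow_mul ht]
      exact Real.rpow_le_rpow_of_exponent_le h1 hnp
    have h3 : (α * t ^ ℓ) ^ n / ((Nat.factorial n) : ℝ) ≤ Real.exp (α * t ^ ℓ) :=
      Real.pow_div_factorial_le_exp (x := α * t ^ ℓ) (by positivity) n
    have hαn : (0:ℝ) < α ^ n := by positivity
    have hfac : (0:ℝ) < ((Nat.factorial n) : ℝ) := by positivity
    have h4 : (t ^ ℓ) ^ n ≤ ((Nat.factorial n) : ℝ) / α ^ n * Real.exp (α * t ^ ℓ) := by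
      rw [mul_pow] at h3
      rw [div_mul_eq_mul_div, le_div_iff₀ hαn]
      rw [div_le_iff₀ hfac] at h3
      nlinarith [h3]
    calc t ^ p ≤ (t ^ ℓ) ^ n := h2
      _ ≤ ((Nat.factorial n) : ℝ) / α ^ n * Real.exp (α * t ^ ℓ) := h4
      _ ≤ max 1 ((Nat.factorial n : ℝ) / α ^ n) * Real.exp (α * t ^ ℓ) := by
          gcongr
          exact le_max_right _ _

set_option maxHeartbeats 2000000 in
/-- **Bound on weighted moments.**
If `f` is bounded below and `c_ℓ |x|^ℓ - C_ℓ ≤ f(x) - f_* ≤ c_u |x|^u + C_u` with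
`u ≥ ℓ > 0`, then for all `p, q > 0` there are `C₁, C₂ > 0`, depending only on
`p, q, β, u, ℓ, c_u, C_u, c_ℓ, C_ℓ`, such that for every probability measure `μ`
with finite `q`-th moment,
`(∫ |x|^p e^{-βf} dμ)/(∫ e^{-βf} dμ) ≤ (C₁ + C₂ ∫ |x|^q dμ)^{pu/(qℓ)}`. -/
theorem weighted_moment_growth_bound
    (β : ℝ) (hβ : 0 < β) (d : ℕ) (hd : 1 ≤ d)
    (u ℓ : ℝ) (hℓ : 0 < ℓ) (hℓu : ℓ ≤ u)
    (cu Cu cl Cl : ℝ) (hcu : 0 < cu) (hCu : 0 < Cu) (hcl : 0 < cl) (hCl : 0 < Cl)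
    (p q : ℝ) (hp : 0 < p) (hq : 0 < q) :
    ∃ C1 > 0, ∃ C2 > 0, ∀ f : Rd d → ℝ, Measurable f → BddBelow (Set.range f) →
      (∀ x : Rd d, cl * ‖x‖ ^ ℓ - Cl ≤ f x - fStar f) →
      (∀ x : Rd d, f x - fStar f ≤ cu * ‖x‖ ^ u + Cu) →
      ∀ μ : Measure (Rd d), IsProbabilityMeasure μ → MomFin q μ →
        (∫⁻ x, (‖x‖₊ : ℝ≥0∞) ^ p * ENNReal.ofReal (Real.exp (-β * f x)) ∂μ) /
            (∫⁻ x, ENNReal.ofReal (Real.exp (-β * f x)) ∂μ)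
          ≤ ENNReal.ofReal
              ((C1 + C2 * (∫⁻ x, (‖x‖₊ : ℝ≥0∞) ^ q ∂μ).toReal) ^ (p * u / (q * ℓ))) := by
  have hu : 0 < u := lt_of_lt_of_le hℓ hℓu
  obtain ⟨K, hK1, hKb⟩ := exists_rpow_le_exp p ℓ (β * cl / 2) hp hℓ (by positivity)
  set A : ℝ := (2 / (β * cl)) * (β * Cl + Real.log (2 * K) + β * Cu) with hA
  set A' : ℝ := max A 1 with hA'
  set B : ℝ := 2 * cu / cl with hB
  have hA'1 : (1:ℝ) ≤ A' := le_max_right _ _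
  have hBpos : 0 < B := by positivity
  set δ : ℝ := (2:ℝ) ^ (ℓ / p) * (A' + B) with hδ
  have hδpos : 0 < δ := by
    have : (0:ℝ) < (2:ℝ) ^ (ℓ / p) := Real.rpow_pos_of_pos (by norm_num) _
    nlinarith
  set γ : ℝ := δ ^ (q / u) with hγ
  have hγpos : 0 < γ := Real.rpow_pos_of_pos hδpos _
  refine ⟨γ, hγpos, 2 * γ, by positivity, ?_⟩
  intro f hf hbdd hlow hupp μ hμ hmom
  have hfs : ∀ x, fStar f ≤ f x := fun x => csInf_le hbdd ⟨x, rfl⟩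
  set F := fStar f with hF
  -- moment
  set m := (∫⁻ x, (‖x‖₊ : ℝ≥0∞) ^ q ∂μ).toReal with hm
  have hm0 : 0 ≤ m := ENNReal.toReal_nonneg
  have hmint : ∫⁻ x, (‖x‖₊ : ℝ≥0∞) ^ q ∂μ = ENNReal.ofReal m := (ENNReal.ofReal_toReal hmom.ne).symm
  set r : ℝ := (2 * m + 1) ^ (1 / q) with hr
  have h2m1 : (1:ℝ) ≤ 2 * m + 1 := by linarith
  have hr1 : 1 ≤ r := Real.one_le_rpow h2m1 (by positivity)
  have hr0 : 0 ≤ r := by linarith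
  have hrq : r ^ q = 2 * m + 1 := by
    rw [hr, ← Real.rpow_mul (by linarith), one_div, inv_mul_cancel₀ hq.ne', Real.rpow_one]
  have hru : r ^ u = (2 * m + 1) ^ (u / q) := by
    rw [hr, ← Real.rpow_mul (by linarith)]
    congr 1
    field_simp
  -- coercion helper
  have hcoe : ∀ (x : Rd d) (e : ℝ), 0 ≤ e → ((‖x‖₊ : ℝ≥0∞)) ^ e = ENNReal.ofReal (‖x‖ ^ e) := by
    intro x e he
    rw [← ENNReal.ofReal_coe_nnreal, coe_nnnorm, ENNReal.ofReal_rpow_of_nonneg (norm_nonneg x) he]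
  -- weight measurability
  have hwmeas : Measurable fun x : Rd d => ENNReal.ofReal (Real.exp (-β * f x)) :=
    (Real.measurable_exp.comp (hf.const_mul (-β))).ennreal_ofReal
  set W := ∫⁻ x, ENNReal.ofReal (Real.exp (-β * f x)) ∂μ with hW
  -- the ball S
  set S : Set (Rd d) := {x | ‖x‖ ≤ r} with hS
  have hSmeas : MeasurableSet S := measurableSet_le measurable_norm measurable_const
  -- Markov: μ Sᶜ ≤ 1/2
  have hScompl : μ Sᶜ ≤ ENNReal.ofReal (1 / 2) := by
    have hsub : Sᶜ ⊆ {x : Rd d | ENNReal.ofReal (2 * m + 1) ≤ (‖x‖₊ : ℝ≥0∞) ^ q} := by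
      intro x hx
      simp only [hS, Set.mem_compl_iff, Set.mem_setOf_eq, not_le] at hx
      simp only [Set.mem_setOf_eq]
      rw [hcoe x q hq.le]
      apply ENNReal.ofReal_le_ofReal
      calc (2 * m + 1) = r ^ q := hrq.symm
        _ ≤ ‖x‖ ^ q := Real.rpow_le_rpow hr0 hx.le hq.le
    have hmark := mul_meas_ge_le_lintegral₀
      (μ := μ) ((measurable_nnnorm.coe_nnreal_ennreal.pow_const q).aemeasurable)
      (ENNReal.ofReal (2 * m + 1))
    rw [hmint] at hmark
    have h2 : ENNReal.ofReal (2 * m + 1) * μ Sᶜ ≤ ENNReal.ofReal m :=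
      le_trans (mul_le_mul_right (measure_mono hsub) _) hmark
    have h3 : ENNReal.ofReal m ≤ ENNReal.ofReal (2 * m + 1) * ENNReal.ofReal (1 / 2) := by
      rw [← ENNReal.ofReal_mul (by linarith)]
      exact ENNReal.ofReal_le_ofReal (by linarith)
    exact (ENNReal.mul_le_mul_iff_right (ENNReal.ofReal_pos.mpr (by linarith)).ne' ENNReal.ofReal_ne_top).mp (h2.trans h3)
  have hShalf : ENNReal.ofReal (1 / 2) ≤ μ S := by
    have hcomp : μ S + μ Sᶜ = 1 := by
      rw [measure_add_measure_compl hSmeas, measure_univ]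
    have hhalf : ENNReal.ofReal (1 / 2) + ENNReal.ofReal (1 / 2) = 1 := by
      rw [← ENNReal.ofReal_add (by norm_num) (by norm_num)]
      norm_num
    have : ENNReal.ofReal (1 / 2) + ENNReal.ofReal (1 / 2) ≤ μ S + ENNReal.ofReal (1 / 2) := by
      rw [hhalf, ← hcomp]
      exact add_le_add_right hScompl _
    exact (ENNReal.add_le_add_iff_right ENNReal.ofReal_ne_top).mp this
  -- denominator lower bound
  set cD : ℝ := Real.exp (-β * (F + cu * r ^ u + Cu)) * (1 / 2) with hcD
  have hcDpos : 0 < cD := by positivity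
  have hWD : ENNReal.ofReal cD ≤ W := by
    calc ENNReal.ofReal cD
        = ENNReal.ofReal (Real.exp (-β * (F + cu * r ^ u + Cu))) * ENNReal.ofReal (1 / 2) := by
          rw [← ENNReal.ofReal_mul (Real.exp_pos _).le]
      _ ≤ ENNReal.ofReal (Real.exp (-β * (F + cu * r ^ u + Cu))) * μ S :=
          mul_le_mul_right hShalf _
      _ = ∫⁻ _ in S, ENNReal.ofReal (Real.exp (-β * (F + cu * r ^ u + Cu))) ∂μ :=
          (setLIntegral_const S _).symm
      _ ≤ ∫⁻ x in S, ENNReal.ofReal (Real.exp (-β * f x)) ∂μ := by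
          apply setLIntegral_mono hwmeas
          intro x hx
          apply ENNReal.ofReal_le_ofReal
          apply Real.exp_le_exp.mpr
          have hxr : ‖x‖ ≤ r := hx
          have hxu : ‖x‖ ^ u ≤ r ^ u := Real.rpow_le_rpow (norm_nonneg x) hxr hu.le
          have h9 : f x ≤ F + cu * r ^ u + Cu := by nlinarith [hupp x, mul_le_mul_of_nonneg_left hxu hcu.le]
          nlinarith [mul_le_mul_of_nonneg_left h9 hβ.le]
      _ ≤ W := by rw [hW]; exact setLIntegral_le_lintegral _ _
  have hW0 : W ≠ 0 := by
    intro h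
    rw [h, le_zero_iff, ENNReal.ofReal_eq_zero] at hWD
    linarith
  have hWtop : W ≠ ⊤ := by
    have : W ≤ ENNReal.ofReal (Real.exp (-β * F)) := by
      calc W ≤ ∫⁻ _, ENNReal.ofReal (Real.exp (-β * F)) ∂μ := by
            apply lintegral_mono
            intro x
            apply ENNReal.ofReal_le_ofReal
            apply Real.exp_le_exp.mpr
            nlinarith [hfs x]
        _ = ENNReal.ofReal (Real.exp (-β * F)) := by
            rw [lintegral_const, measure_univ, mul_one]
    exact ne_top_of_le_ne_top ENNReal.ofReal_ne_top this
  -- radius R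
  set R : ℝ := (A' + B * (2 * m + 1) ^ (u / q)) ^ (1 / ℓ) with hR
  have hmq1 : (1:ℝ) ≤ (2 * m + 1) ^ (u / q) := Real.one_le_rpow h2m1 (by positivity)
  have hbase1 : (1:ℝ) ≤ A' + B * (2 * m + 1) ^ (u / q) := by nlinarith
  have hbase0 : (0:ℝ) ≤ A' + B * (2 * m + 1) ^ (u / q) := by linarith
  have hR1 : 1 ≤ R := Real.one_le_rpow hbase1 (by positivity)
  have hR0 : (0:ℝ) ≤ R := by linarith
  have hRℓ : R ^ ℓ = A' + B * (2 * m + 1) ^ (u / q) := by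
    rw [hR, ← Real.rpow_mul hbase0, one_div, inv_mul_cancel₀ hℓ.ne', Real.rpow_one]
  -- tail constant
  set cT : ℝ := Real.exp (-β * F) * (K * Real.exp (β * Cl) *
      Real.exp (-(β * cl / 2) * R ^ ℓ)) with hcT
  have htail : ∀ x : Rd d, R ≤ ‖x‖ → ‖x‖ ^ p * Real.exp (-β * f x) ≤ cT := by
    intro x hx
    have ht0 : (0:ℝ) ≤ ‖x‖ := norm_nonneg x
    have h1 : Real.exp (-β * f x) ≤
        Real.exp (-β * F) * Real.exp (β * Cl) * Real.exp (-(β * cl) * ‖x‖ ^ ℓ) := by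
      rw [← Real.exp_add, ← Real.exp_add]
      apply Real.exp_le_exp.mpr
      nlinarith [hlow x, mul_le_mul_of_nonneg_left (hlow x) hβ.le]
    have h2 : ‖x‖ ^ p ≤ K * Real.exp ((β * cl / 2) * ‖x‖ ^ ℓ) := by
      have := hKb ‖x‖ ht0
      linarith [this]
    have h3 : R ^ ℓ ≤ ‖x‖ ^ ℓ := Real.rpow_le_rpow hR0 hx hℓ.le
    have h4 : Real.exp ((β * cl / 2) * ‖x‖ ^ ℓ) * Real.exp (-(β * cl) * ‖x‖ ^ ℓ) ≤
        Real.exp (-(β * cl / 2) * R ^ ℓ) := by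
      rw [← Real.exp_add]
      apply Real.exp_le_exp.mpr
      nlinarith [mul_le_mul_of_nonneg_left h3 (show (0:ℝ) ≤ β * cl / 2 by positivity)]
    calc ‖x‖ ^ p * Real.exp (-β * f x)
        ≤ (K * Real.exp ((β * cl / 2) * ‖x‖ ^ ℓ)) *
          (Real.exp (-β * F) * Real.exp (β * Cl) * Real.exp (-(β * cl) * ‖x‖ ^ ℓ)) := by
          apply mul_le_mul h2 h1 (Real.exp_pos _).le
          positivity
      _ = Real.exp (-β * F) * (K * Real.exp (β * Cl) *
          (Real.exp ((β * cl / 2) * ‖x‖ ^ ℓ) * Real.exp (-(β * cl) * ‖x‖ ^ ℓ))) := by ring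
      _ ≤ cT := by
          rw [hcT]
          have hKe : (0:ℝ) ≤ Real.exp (-β * F) * (K * Real.exp (β * Cl)) := by positivity
          nlinarith [h4, Real.exp_pos (-(β * cl / 2) * R ^ ℓ),
            mul_le_mul_of_nonneg_left h4 hKe]
  have hcTpos : 0 < cT := by positivity
  -- split numerator
  set N := ∫⁻ x, (‖x‖₊ : ℝ≥0∞) ^ p * ENNReal.ofReal (Real.exp (-β * f x)) ∂μ with hN
  set S' : Set (Rd d) := {x | ‖x‖ ≤ R} with hS'
  have hS'meas : MeasurableSet S' := measurableSet_le measurable_norm measurable_const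
  have hsplit : N = (∫⁻ x in S', (‖x‖₊ : ℝ≥0∞) ^ p * ENNReal.ofReal (Real.exp (-β * f x)) ∂μ)
      + ∫⁻ x in S'ᶜ, (‖x‖₊ : ℝ≥0∞) ^ p * ENNReal.ofReal (Real.exp (-β * f x)) ∂μ :=
    (lintegral_add_compl _ hS'meas).symm
  have h1 : (∫⁻ x in S', (‖x‖₊ : ℝ≥0∞) ^ p * ENNReal.ofReal (Real.exp (-β * f x)) ∂μ)
      ≤ ENNReal.ofReal (R ^ p) * W := by
    calc (∫⁻ x in S', (‖x‖₊ : ℝ≥0∞) ^ p * ENNReal.ofReal (Real.exp (-β * f x)) ∂μ)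
        ≤ ∫⁻ x in S', ENNReal.ofReal (R ^ p) * ENNReal.ofReal (Real.exp (-β * f x)) ∂μ := by
          apply setLIntegral_mono (hwmeas.const_mul _)
          intro x hx
          apply mul_le_mul_left
          rw [hcoe x p hp.le]
          exact ENNReal.ofReal_le_ofReal (Real.rpow_le_rpow (norm_nonneg x) hx hp.le)
      _ = ENNReal.ofReal (R ^ p) * ∫⁻ x in S', ENNReal.ofReal (Real.exp (-β * f x)) ∂μ :=
          lintegral_const_mul _ hwmeas
      _ ≤ ENNReal.ofReal (R ^ p) * W :=
          mul_le_mul_right (setLIntegral_le_lintegral _ _) _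
  have h2 : (∫⁻ x in S'ᶜ, (‖x‖₊ : ℝ≥0∞) ^ p * ENNReal.ofReal (Real.exp (-β * f x)) ∂μ)
      ≤ ENNReal.ofReal cT := by
    calc (∫⁻ x in S'ᶜ, (‖x‖₊ : ℝ≥0∞) ^ p * ENNReal.ofReal (Real.exp (-β * f x)) ∂μ)
        ≤ ∫⁻ _ in S'ᶜ, ENNReal.ofReal cT ∂μ := by
          apply setLIntegral_mono measurable_const
          intro x hx
          simp only [hS', Set.mem_compl_iff, Set.mem_setOf_eq, not_le] at hx
          rw [hcoe x p hp.le, ← ENNReal.ofReal_mul (by positivity)]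
          exact ENNReal.ofReal_le_ofReal (htail x hx.le)
      _ = ENNReal.ofReal cT * μ S'ᶜ := setLIntegral_const _ _
      _ ≤ ENNReal.ofReal cT * 1 := mul_le_mul_right prob_le_one _
      _ = ENNReal.ofReal cT := mul_one _
  -- tail ≤ denominator constant
  have hTD : ENNReal.ofReal cT ≤ ENNReal.ofReal cD := by
    apply ENNReal.ofReal_le_ofReal
    have hE : Real.log (2 * K) ≤ (β * cl / 2) * R ^ ℓ - β * Cl - β * cu * r ^ u - β * Cu := by
      have hαA : (β * cl / 2) * A = β * Cl + Real.log (2 * K) + β * Cu := by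
        rw [hA]
        field_simp
      have hαB : (β * cl / 2) * B = β * cu := by
        rw [hB]
        field_simp
      have hAA' : A ≤ A' := le_max_left _ _
      have h5 : (β * cl / 2) * R ^ ℓ =
          (β * cl / 2) * A' + β * cu * (2 * m + 1) ^ (u / q) := by
        rw [hRℓ, mul_add]
        congr 1
        rw [← hαB]; ring
      have h6 : (β * cl / 2) * A ≤ (β * cl / 2) * A' :=
        mul_le_mul_of_nonneg_left hAA' (by positivity)
      rw [hru]
      linarith [hαA, h5, h6]
    have h2K : 2 * K ≤ Real.exp ((β * cl / 2) * R ^ ℓ - β * Cl - β * cu * r ^ u - β * Cu) := by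
      rw [← Real.exp_log (show (0:ℝ) < 2 * K by linarith)]
      exact Real.exp_le_exp.mpr hE
    have hcore : K * Real.exp (β * Cl) * Real.exp (-(β * cl / 2) * R ^ ℓ) ≤
        Real.exp (-β * (cu * r ^ u + Cu)) * (1 / 2) := by
      calc K * Real.exp (β * Cl) * Real.exp (-(β * cl / 2) * R ^ ℓ)
          = (2 * K) * (Real.exp (β * Cl) * Real.exp (-(β * cl / 2) * R ^ ℓ)) * (1 / 2) := by
            ring
        _ ≤ Real.exp ((β * cl / 2) * R ^ ℓ - β * Cl - β * cu * r ^ u - β * Cu) *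
            (Real.exp (β * Cl) * Real.exp (-(β * cl / 2) * R ^ ℓ)) * (1 / 2) := by
            have hpos : (0:ℝ) ≤ Real.exp (β * Cl) * Real.exp (-(β * cl / 2) * R ^ ℓ) := by
              positivity
            exact mul_le_mul_of_nonneg_right
              (mul_le_mul_of_nonneg_right h2K hpos) (by norm_num)
        _ = Real.exp (-β * (cu * r ^ u + Cu)) * (1 / 2) := by
            rw [← Real.exp_add, ← Real.exp_add]
            congr 2
            ring
    calc cT = Real.exp (-β * F) *
        (K * Real.exp (β * Cl) * Real.exp (-(β * cl / 2) * R ^ ℓ)) := hcT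
      _ ≤ Real.exp (-β * F) * (Real.exp (-β * (cu * r ^ u + Cu)) * (1 / 2)) :=
          mul_le_mul_of_nonneg_left hcore (Real.exp_pos _).le
      _ = cD := by
          rw [hcD, ← mul_assoc, ← Real.exp_add]
          congr 2
          ring
  -- assemble the ratio bound
  have hdiv : N / W ≤ ENNReal.ofReal (R ^ p) + 1 := by
    calc N / W ≤ (ENNReal.ofReal (R ^ p) * W + ENNReal.ofReal cT) / W := by
          apply ENNReal.div_le_div_right
          rw [hsplit]
          exact add_le_add h1 h2
      _ = ENNReal.ofReal (R ^ p) * W / W + ENNReal.ofReal cT / W := ENNReal.add_div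
      _ ≤ ENNReal.ofReal (R ^ p) + 1 := by
          apply add_le_add
          · rw [div_eq_mul_inv, mul_assoc, ENNReal.mul_inv_cancel hW0 hWtop, mul_one]
          · calc ENNReal.ofReal cT / W ≤ ENNReal.ofReal cD / ENNReal.ofReal cD :=
                ENNReal.div_le_div hTD hWD
              _ ≤ 1 := ENNReal.div_self_le_one
  -- final real computation
  have hRp1 : (1:ℝ) ≤ R ^ p := Real.one_le_rpow hR1 hp.le
  have hfinal : R ^ p + 1 ≤ (γ + 2 * γ * m) ^ (p * u / (q * ℓ)) := by
    have step1 : R ^ p + 1 ≤ 2 * R ^ p := by linarith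
    have h2pow : ((2:ℝ) ^ (ℓ / p)) ^ (p / ℓ) = 2 := by
      rw [← Real.rpow_mul (by norm_num)]
      have : ℓ / p * (p / ℓ) = 1 := by field_simp
      rw [this, Real.rpow_one]
    have hRpe : (R ^ ℓ) ^ (p / ℓ) = R ^ p := by
      rw [← Real.rpow_mul hR0]
      congr 1
      field_simp
    have step2 : 2 * R ^ p = ((2:ℝ) ^ (ℓ / p) * R ^ ℓ) ^ (p / ℓ) := by
      rw [Real.mul_rpow (by positivity) (by positivity), h2pow, hRpe]
    have step3 : (2:ℝ) ^ (ℓ / p) * R ^ ℓ ≤ δ * (2 * m + 1) ^ (u / q) := by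
      rw [hRℓ, hδ]
      have h7 : A' + B * (2 * m + 1) ^ (u / q) ≤ (A' + B) * (2 * m + 1) ^ (u / q) := by
        nlinarith
      have h8 : (0:ℝ) ≤ (2:ℝ) ^ (ℓ / p) := by positivity
      nlinarith [mul_le_mul_of_nonneg_left h7 h8]
    have step4 : δ * (2 * m + 1) ^ (u / q) = (γ * (2 * m + 1)) ^ (u / q) := by
      rw [Real.mul_rpow hγpos.le (by linarith), hγ, ← Real.rpow_mul hδpos.le]
      have : q / u * (u / q) = 1 := by field_simp
      rw [this, Real.rpow_one]
    have step5 : ((γ * (2 * m + 1)) ^ (u / q)) ^ (p / ℓ) =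
        (γ + 2 * γ * m) ^ (p * u / (q * ℓ)) := by
      rw [← Real.rpow_mul (by positivity)]
      have he : u / q * (p / ℓ) = p * u / (q * ℓ) := by
        field_simp
      rw [he]
      congr 1
      ring
    calc R ^ p + 1 ≤ 2 * R ^ p := step1
      _ = ((2:ℝ) ^ (ℓ / p) * R ^ ℓ) ^ (p / ℓ) := step2
      _ ≤ ((γ * (2 * m + 1)) ^ (u / q)) ^ (p / ℓ) := by
          rw [← step4]
          exact Real.rpow_le_rpow (by positivity) step3 (by positivity)
      _ = (γ + 2 * γ * m) ^ (p * u / (q * ℓ)) := step5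
  calc N / W ≤ ENNReal.ofReal (R ^ p) + 1 := hdiv
    _ = ENNReal.ofReal (R ^ p + 1) := by
        rw [ENNReal.ofReal_add (by positivity) zero_le_one, ENNReal.ofReal_one]
    _ ≤ ENNReal.ofReal ((γ + 2 * γ * m) ^ (p * u / (q * ℓ))) :=
        ENNReal.ofReal_le_ofReal hfinal


end
end

section
/- Fix β > 0 and d ≥ 1. Suppose f : ℝ^d → ℝ is bounded from below by f_* = inf f and there are a real number ℓ > 0 and positive constants c_u, C_u, c_ℓ, C_ℓ such that c_ℓ |x|^ℓ − C_ℓ ≤ f(x) − f_* ≤ c_u |x|^ℓ + C_u for all x ∈ ℝ^d. Then for all 0 < p ≤ q there exists a constant C_2 > 0, depending only on p, q, β, ℓ, c_u, C_u, c_ℓ, C_ℓ, such that for every Borel probability measure μ on ℝ^d with ∫ |x|^q μ(dx) < ∞, (∫ |x|^p e^{−β f(x)} μ(dx)) / (∫ e^{−β f(x)} μ(dx)) ≤ (C_2 ∫ |x|^q μ(dx))^{p/q}. -/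
open MeasureTheory ENNReal
open scoped NNReal

noncomputable section

/-- **Bound on weighted moments, case `u = ℓ`, `p ≤ q`: no additive constant.**
If `f` is bounded below and `c_ℓ |x|^ℓ - C_ℓ ≤ f(x) - f_* ≤ c_u |x|^ℓ + C_u` with
`ℓ > 0`, then for all `0 < p ≤ q` there is `C₂ > 0`, depending only on
`p, q, β, ℓ, c_u, C_u, c_ℓ, C_ℓ`, such that for every probability measure `μ`
with finite `q`-th moment,
`(∫ |x|^p e^{-βf} dμ)/(∫ e^{-βf} dμ) ≤ (C₂ ∫ |x|^q dμ)^{p/q}`. -/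
theorem weighted_moment_growth_bound_same_exponent
    (β : ℝ) (hβ : 0 < β) (d : ℕ) (hd : 1 ≤ d)
    (ℓ : ℝ) (hℓ : 0 < ℓ)
    (cu Cu cl Cl : ℝ) (hcu : 0 < cu) (hCu : 0 < Cu) (hcl : 0 < cl) (hCl : 0 < Cl)
    (p q : ℝ) (hp : 0 < p) (hpq : p ≤ q) :
    ∃ C2 > 0, ∀ f : Rd d → ℝ, Measurable f → BddBelow (Set.range f) →
      (∀ x : Rd d, cl * ‖x‖ ^ ℓ - Cl ≤ f x - fStar f) →
      (∀ x : Rd d, f x - fStar f ≤ cu * ‖x‖ ^ ℓ + Cu) →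
      ∀ μ : Measure (Rd d), IsProbabilityMeasure μ → MomFin q μ →
        (∫⁻ x, (‖x‖₊ : ℝ≥0∞) ^ p * ENNReal.ofReal (Real.exp (-β * f x)) ∂μ) /
            (∫⁻ x, ENNReal.ofReal (Real.exp (-β * f x)) ∂μ)
          ≤ ENNReal.ofReal
              ((C2 * (∫⁻ x, (‖x‖₊ : ℝ≥0∞) ^ q ∂μ).toReal) ^ (p / q)) := by
  have hq : 0 < q := lt_of_lt_of_le hp hpq
  set m : ℝ := max 1 ((cu / cl) ^ (1 / ℓ)) with hm_def
  have hm1 : (1 : ℝ) ≤ m := le_max_left _ _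
  have hm0 : (0 : ℝ) < m := lt_of_lt_of_le one_pos hm1
  have hmℓ : cu ≤ cl * m ^ ℓ := by
    have h1 : (cu / cl) ^ (1 / ℓ) ≤ m := le_max_right _ _
    have h2 : ((cu / cl) ^ (1 / ℓ)) ^ ℓ ≤ m ^ ℓ :=
      Real.rpow_le_rpow (Real.rpow_nonneg (by positivity) _) h1 hℓ.le
    rw [← Real.rpow_mul (by positivity), one_div, inv_mul_cancel₀ hℓ.ne',
      Real.rpow_one] at h2
    rw [← div_le_iff₀' hcl]
    exact h2
  set C0 : ℝ := max (m ^ p) (Real.exp (β * (Cl + Cu))) with hC0_def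
  have hC0 : 0 < C0 := lt_of_lt_of_le (Real.exp_pos _) (le_max_right _ _)
  refine ⟨(2 * C0) ^ (q / p), Real.rpow_pos_of_pos (by positivity) _, ?_⟩
  intro f hfm _ hlow hup μ hμ hMq'
  have hMq : (∫⁻ x, (‖x‖₊ : ℝ≥0∞) ^ q ∂μ) < ⊤ := hMq'
  set A : EuclideanSpace ℝ (Fin d) → ℝ≥0∞ := fun x => (‖x‖₊ : ℝ≥0∞) ^ p with hA_def
  set B : EuclideanSpace ℝ (Fin d) → ℝ≥0∞ :=
    fun x => ENNReal.ofReal (Real.exp (-β * f x)) with hB_def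
  have hAm : Measurable A := measurable_nnnorm.coe_nnreal_ennreal.pow_const _
  have hBm : Measurable B := ((hfm.const_mul (-β)).exp).ennreal_ofReal
  have hAeq : ∀ x, A x = ENNReal.ofReal (‖x‖ ^ p) := fun x => by
    show (‖x‖₊ : ℝ≥0∞) ^ p = ENNReal.ofReal (‖x‖ ^ p)
    rw [← enorm_eq_nnnorm, ← ofReal_norm,
      ← ENNReal.ofReal_rpow_of_nonneg (norm_nonneg x) hp.le]
  -- pointwise real inequality
  have key : ∀ x y : EuclideanSpace ℝ (Fin d),
      ‖x‖ ^ p * Real.exp (-β * f x) ≤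
        C0 * (‖x‖ ^ p * Real.exp (-β * f y) + ‖y‖ ^ p * Real.exp (-β * f x)) := by
    intro x y
    have hEx : (0:ℝ) < Real.exp (-β * f x) := Real.exp_pos _
    have hEy : (0:ℝ) < Real.exp (-β * f y) := Real.exp_pos _
    have hxp : (0:ℝ) ≤ ‖x‖ ^ p := Real.rpow_nonneg (norm_nonneg _) _
    have hyp : (0:ℝ) ≤ ‖y‖ ^ p := Real.rpow_nonneg (norm_nonneg _) _
    by_cases h : ‖x‖ ≤ m * ‖y‖
    · have h1 : ‖x‖ ^ p ≤ m ^ p * ‖y‖ ^ p := by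
        rw [← Real.mul_rpow hm0.le (norm_nonneg _)]
        exact Real.rpow_le_rpow (norm_nonneg _) h hp.le
      have h2 : m ^ p ≤ C0 := le_max_left _ _
      nlinarith [mul_le_mul_of_nonneg_right h1 hEx.le,
        mul_le_mul_of_nonneg_right (mul_le_mul_of_nonneg_right h2 hyp)
          hEx.le, mul_nonneg (mul_nonneg hC0.le hxp) hEy.le]
    · push_neg at h
      have hy : ‖y‖ ≤ ‖x‖ / m := by
        rw [le_div_iff₀ hm0]; nlinarith
      have hyl : ‖y‖ ^ ℓ ≤ (‖x‖ / m) ^ ℓ :=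
        Real.rpow_le_rpow (norm_nonneg _) hy hℓ.le
      have hdiv : (‖x‖ / m) ^ ℓ = ‖x‖ ^ ℓ / m ^ ℓ :=
        Real.div_rpow (norm_nonneg x) hm0.le ℓ
      have hmp : (0:ℝ) < m ^ ℓ := Real.rpow_pos_of_pos hm0 _
      have hcu_bound : cu * ‖y‖ ^ ℓ ≤ cl * ‖x‖ ^ ℓ := by
        have : cu * ‖y‖ ^ ℓ ≤ cu * (‖x‖ ^ ℓ / m ^ ℓ) := by
          rw [← hdiv]; exact mul_le_mul_of_nonneg_left hyl hcu.le
        have hxl : (0:ℝ) ≤ ‖x‖ ^ ℓ := Real.rpow_nonneg (norm_nonneg _) _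
        calc cu * ‖y‖ ^ ℓ ≤ cu * (‖x‖ ^ ℓ / m ^ ℓ) := this
          _ = (cu / m ^ ℓ) * ‖x‖ ^ ℓ := by ring
          _ ≤ cl * ‖x‖ ^ ℓ := by
              apply mul_le_mul_of_nonneg_right _ hxl
              rw [div_le_iff₀ hmp]; linarith
      have hfy : f y ≤ f x + (Cl + Cu) := by
        have h3 := hup y
        have h4 := hlow x
        linarith
      have hE : Real.exp (-β * f x) ≤ C0 * Real.exp (-β * f y) := by
        have : Real.exp (-β * f x) ≤ Real.exp (β * (Cl + Cu)) * Real.exp (-β * f y) := by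
          rw [← Real.exp_add]
          apply Real.exp_le_exp.2
          nlinarith
        calc Real.exp (-β * f x) ≤ Real.exp (β * (Cl + Cu)) * Real.exp (-β * f y) := this
          _ ≤ C0 * Real.exp (-β * f y) :=
            mul_le_mul_of_nonneg_right (le_max_right _ _) hEy.le
      nlinarith [mul_le_mul_of_nonneg_left hE hxp,
        mul_nonneg (mul_nonneg hC0.le hyp) hEx.le]
  -- ENNReal pointwise inequality
  have keyE : ∀ x y, A x * B x ≤ ENNReal.ofReal C0 * (A x * B y + A y * B x) := by
    intro x y
    have hEx : (0:ℝ) ≤ Real.exp (-β * f x) := (Real.exp_pos _).le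
    have hEy : (0:ℝ) ≤ Real.exp (-β * f y) := (Real.exp_pos _).le
    have hxp : (0:ℝ) ≤ ‖x‖ ^ p := Real.rpow_nonneg (norm_nonneg _) _
    have hyp : (0:ℝ) ≤ ‖y‖ ^ p := Real.rpow_nonneg (norm_nonneg _) _
    rw [hAeq, hAeq, hB_def]
    simp only
    rw [← ENNReal.ofReal_mul hxp, ← ENNReal.ofReal_mul hxp, ← ENNReal.ofReal_mul hyp,
      ← ENNReal.ofReal_add (by positivity) (by positivity),
      ← ENNReal.ofReal_mul hC0.le]
    exact ENNReal.ofReal_le_ofReal (key x y)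
  set N := ∫⁻ x, A x * B x ∂μ with hN_def
  set D := ∫⁻ x, B x ∂μ with hD_def
  set Mp := ∫⁻ x, A x ∂μ with hMp_def
  set Mq := ∫⁻ x, (‖x‖₊ : ℝ≥0∞) ^ q ∂μ with hMq_def
  -- main integral bound
  have hmain : N ≤ (ENNReal.ofReal (2 * C0) * Mp) * D := by
    have step1 : N = ∫⁻ x, ∫⁻ _, A x * B x ∂μ ∂μ := by
      simp [lintegral_const, measure_univ, hN_def]
    have step2 : ∀ x, ∫⁻ y, ENNReal.ofReal C0 * (A x * B y + A y * B x) ∂μ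
        = ENNReal.ofReal C0 * (A x * D + Mp * B x) := by
      intro x
      rw [lintegral_const_mul _ (f := fun y => A x * B y + A y * B x) (((hBm.const_mul _).add (hAm.mul_const _)))]
      congr 1
      rw [lintegral_add_left (hBm.const_mul _), lintegral_const_mul _ hBm,
        lintegral_mul_const _ hAm]
    calc N = ∫⁻ x, ∫⁻ _, A x * B x ∂μ ∂μ := step1
      _ ≤ ∫⁻ x, ∫⁻ y, ENNReal.ofReal C0 * (A x * B y + A y * B x) ∂μ ∂μ := by
          apply lintegral_mono; intro x; apply lintegral_mono; intro y; exact keyE x y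
      _ = ∫⁻ x, ENNReal.ofReal C0 * (A x * D + Mp * B x) ∂μ := by
          simp only [step2]
      _ = ENNReal.ofReal C0 * (Mp * D + Mp * D) := by
          rw [lintegral_const_mul _ (f := fun x => A x * D + Mp * B x) ((hAm.mul_const _).add (hBm.const_mul _))]
          congr 1
          rw [lintegral_add_left (hAm.mul_const _), lintegral_mul_const _ hAm,
            lintegral_const_mul _ hBm]
      _ = (ENNReal.ofReal (2 * C0) * Mp) * D := by
          rw [ENNReal.ofReal_mul (by norm_num), ENNReal.ofReal_ofNat]
          ring
  -- Jensen: Mp ≤ Mq ^ (p/q)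
  have hJ : Mp ≤ Mq ^ (p / q) := by
    rcases eq_or_lt_of_le hpq with heq | hlt
    · subst heq
      rw [div_self hp.ne', ENNReal.rpow_one]
    · have hr : 1 < q / p := (one_lt_div hp).2 hlt
      have hconj : (q / p).HolderConjugate ((q / p).conjExponent) :=
        Real.HolderConjugate.conjExponent hr
      have := ENNReal.lintegral_mul_le_Lp_mul_Lq μ hconj hAm.aemeasurable
        aemeasurable_const (g := fun _ => (1 : ℝ≥0∞))
      simp only [Pi.mul_apply, mul_one, ENNReal.one_rpow, lintegral_const,
        measure_univ, one_mul, ENNReal.one_rpow] at this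
      have hApow : ∀ x, A x ^ (q / p) = (‖x‖₊ : ℝ≥0∞) ^ q := by
        intro x
        rw [hA_def]
        rw [← ENNReal.rpow_mul]
        congr 1
        field_simp
      rw [one_div, ← hMp_def] at this
      calc Mp ≤ (∫⁻ x, A x ^ (q / p) ∂μ) ^ (q / p)⁻¹ := this
        _ = Mq ^ (p / q) := by
            simp only [hApow]
            rw [← hMq_def, inv_div]
  -- final conversion
  have ht : (0:ℝ) ≤ Mq.toReal := ENNReal.toReal_nonneg
  have hfin : ENNReal.ofReal (2 * C0) * Mq ^ (p / q)
      = ENNReal.ofReal (((2 * C0) ^ (q / p) * Mq.toReal) ^ (p / q)) := by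
    conv_lhs => rw [← ENNReal.ofReal_toReal hMq.ne]
    rw [ENNReal.ofReal_rpow_of_nonneg ht (by positivity),
      ← ENNReal.ofReal_mul (by positivity)]
    congr 1
    rw [Real.mul_rpow (by positivity) ht, ← Real.rpow_mul (by positivity),
      div_mul_div_comm, mul_comm q p, div_self (by positivity : (0:ℝ) < p * q).ne',
      Real.rpow_one]
  apply ENNReal.div_le_of_le_mul
  calc N ≤ (ENNReal.ofReal (2 * C0) * Mp) * D := hmain
    _ ≤ (ENNReal.ofReal (2 * C0) * Mq ^ (p / q)) * D := by
        gcongr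
    _ = ENNReal.ofReal (((2 * C0) ^ (q / p) * Mq.toReal) ^ (p / q)) * D := by rw [hfin]


end
end
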